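/- arXiv:2604.16710 — 9 statements merged into one kernel-verified Lean document; each statement's English description precedes it below -/
import Mathlib

section
/- Suppose A = W - D is Lyapunov diagonally stable. If x, y ∈ ℝ^n both satisfy Dx = [Wx + u]_0^1 and Dy = [Wy + u]_0^1, then x = y. Consequently, for each input u, the linear-threshold network ẋ = -Dx + [Wx + u]_0^1 admits exactly one equilibrium point. -/
open Matrix

/-- Saturation nonlinearity `[z]₀¹ = max(0, min(z, 1))`. -/
noncomputable def sat (z : ℝ) : ℝ := max 0 (min z 1)

lemma sat_nonneg (z : ℝ) : 0 ≤ sat z := le_max_left _ _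

lemma sat_le_one (z : ℝ) : sat z ≤ 1 := max_le zero_le_one (min_le_right _ _)

lemma sat_continuous : Continuous sat := by
  unfold sat; fun_prop

lemma sat_mono : Monotone sat := fun a b h =>
  max_le_max le_rfl (min_le_min h le_rfl)

lemma sat_sub_le {a b : ℝ} (h : b ≤ a) : sat a - sat b ≤ a - b := by
  unfold sat
  rcases le_total a 1 with h1 | h1 <;> rcases le_total b 1 with h2 | h2 <;>
    rcases le_total a 0 with h3 | h3 <;> rcases le_total b 0 with h4 | h4 <;>
    simp [min_eq_left, min_eq_right, max_eq_left, max_eq_right, *] <;>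
    linarith

lemma sat_key (a b : ℝ) : (sat a - sat b) ^ 2 ≤ (sat a - sat b) * (a - b) := by
  rcases le_total b a with h | h
  · have h0 : 0 ≤ sat a - sat b := sub_nonneg.2 (sat_mono h)
    have h1 : sat a - sat b ≤ a - b := sat_sub_le h
    nlinarith
  · have h0 : 0 ≤ sat b - sat a := sub_nonneg.2 (sat_mono h)
    have h1 : sat b - sat a ≤ b - a := sat_sub_le h
    nlinarith

/-- The basic nonnegativity of a single term in the quadratic certificate. -/
lemma key_nonneg {dd ll s t a b : ℝ} (hd : 0 < dd) (hl : 0 < ll)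
    (hs : dd * s = sat a) (ht : dd * t = sat b) :
    0 ≤ ll * (s - t) * ((a - b) - dd * (s - t)) := by
  have hkey := sat_key a b
  rw [← hs, ← ht] at hkey
  have h2 : 0 ≤ ll * ((dd * s - dd * t) * (a - b) - (dd * s - dd * t) ^ 2) :=
    mul_nonneg hl.le (by nlinarith)
  have h3 : dd * (ll * (s - t) * ((a - b) - dd * (s - t)))
      = ll * ((dd * s - dd * t) * (a - b) - (dd * s - dd * t) ^ 2) := by ring
  by_contra hg
  push_neg at hg
  nlinarith [mul_pos hd (neg_pos.mpr hg)]

/-- Uniqueness of solutions for the generalized saturated system. -/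
lemma master_uniq (n : ℕ) (d lam : Fin n → ℝ) (hd : ∀ i, 0 < d i) (hlam : ∀ i, 0 < lam i)
    (h : (Fin n → ℝ) → Fin n → ℝ)
    (hQ : ∀ x y : Fin n → ℝ, x ≠ y →
      (∑ i, lam i * (x i - y i) * ((h x i - h y i) - d i * (x i - y i))) < 0) :
    ∀ x y : Fin n → ℝ, (∀ i, d i * x i = sat (h x i)) → (∀ i, d i * y i = sat (h y i)) →
      x = y := by
  intro x y hx hy
  by_contra hne
  have hQ' := hQ x y hne
  have hnn : 0 ≤ ∑ i, lam i * (x i - y i) * ((h x i - h y i) - d i * (x i - y i)) :=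
    Finset.sum_nonneg fun i _ => key_nonneg (hd i) (hlam i) (hx i) (hy i)
  linarith

/-- Joint continuity of `Fin.snoc`. -/
lemma snoc_continuous (n : ℕ) :
    Continuous (fun p : (Fin n → ℝ) × ℝ => (Fin.snoc p.1 p.2 : Fin (n + 1) → ℝ)) := by
  apply continuous_pi
  intro i
  induction i using Fin.lastCases with
  | last => simpa using continuous_snd
  | cast j => simpa using (continuous_apply j).comp' continuous_fst

/-- Existence and uniqueness for the generalized saturated system, by induction on `n`. -/
lemma master : ∀ (n : ℕ) (d lam : Fin n → ℝ), (∀ i, 0 < d i) → (∀ i, 0 < lam i) →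
    ∀ h : (Fin n → ℝ) → Fin n → ℝ, Continuous h →
    (∀ x y : Fin n → ℝ, x ≠ y →
      (∑ i, lam i * (x i - y i) * ((h x i - h y i) - d i * (x i - y i))) < 0) →
    ∃ x : Fin n → ℝ, ∀ i, d i * x i = sat (h x i) := by
  intro n
  induction n with
  | zero =>
    intro d lam _ _ h _ _
    exact ⟨fun i => 0, fun i => i.elim0⟩
  | succ n IH =>
    intro d lam hd hlam h hc hQ
    have hXc := snoc_continuous n
    -- continuity of t ↦ snoc x' t for fixed x'
    have hXc1 : ∀ x' : Fin n → ℝ, Continuous (fun t : ℝ => (Fin.snoc x' t : Fin (n+1) → ℝ)) := by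
      intro x'
      exact hXc.comp (continuous_const.prodMk continuous_id)
    -- scalar existence
    have scalar_ex : ∀ x' : Fin n → ℝ, ∃ t : ℝ,
        d (Fin.last n) * t = sat (h (Fin.snoc x' t) (Fin.last n)) := by
      intro x'
      have hdN := hd (Fin.last n)
      set g : ℝ → ℝ := fun t => sat (h (Fin.snoc x' t) (Fin.last n)) / d (Fin.last n) - t with hg
      have hgc : Continuous g := by
        apply Continuous.sub _ continuous_id
        exact (sat_continuous.comp ((continuous_apply (Fin.last n)).comp
          (hc.comp (hXc1 x')))).div_const _
      have hga : 0 ≤ g 0 := by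
        have := sat_nonneg (h (Fin.snoc x' (0:ℝ)) (Fin.last n))
        simp [hg]
        positivity
      have hgb : g (1 / d (Fin.last n)) ≤ 0 := by
        have h1 : sat (h (Fin.snoc x' (1 / d (Fin.last n))) (Fin.last n)) ≤ 1 := sat_le_one _
        have : sat (h (Fin.snoc x' (1 / d (Fin.last n))) (Fin.last n)) / d (Fin.last n)
            ≤ 1 / d (Fin.last n) := by gcongr
        simp only [hg]
        linarith
      have h0le : (0:ℝ) ≤ 1 / d (Fin.last n) := by positivity
      have := intermediate_value_Icc' h0le hgc.continuousOn
      have hmem : (0:ℝ) ∈ Set.Icc (g (1 / d (Fin.last n))) (g 0) := ⟨hgb, hga⟩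
      obtain ⟨t, _, ht⟩ := this hmem
      refine ⟨t, ?_⟩
      have : sat (h (Fin.snoc x' t) (Fin.last n)) / d (Fin.last n) = t := by
        have := ht
        simp only [hg] at this
        linarith
      field_simp at this
      linarith [this]
    -- scalar uniqueness
    have scalar_uniq : ∀ (x' : Fin n → ℝ) (s t : ℝ),
        d (Fin.last n) * s = sat (h (Fin.snoc x' s) (Fin.last n)) →
        d (Fin.last n) * t = sat (h (Fin.snoc x' t) (Fin.last n)) → s = t := by
      intro x' s t hs ht
      by_contra hne
      have hxy : (Fin.snoc x' s : Fin (n+1) → ℝ) ≠ Fin.snoc x' t := by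
        intro e
        exact hne (by simpa using congrFun e (Fin.last n))
      have hQ' := hQ _ _ hxy
      have hnn : 0 ≤ ∑ i, lam i * ((Fin.snoc x' s : Fin (n+1) → ℝ) i - (Fin.snoc x' t : Fin (n+1) → ℝ) i) *
          ((h (Fin.snoc x' s) i - h (Fin.snoc x' t) i)
            - d i * ((Fin.snoc x' s : Fin (n+1) → ℝ) i - (Fin.snoc x' t : Fin (n+1) → ℝ) i)) := by
        apply Finset.sum_nonneg
        intro i _
        induction i using Fin.lastCases with
        | last =>
          simp only [Fin.snoc_last]
          exact key_nonneg (hd _) (hlam _) hs ht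
        | cast j => simp [Fin.snoc_castSucc]
      linarith
    choose φ hφ using scalar_ex
    have hφ0 : ∀ x', 0 ≤ φ x' := by
      intro x'
      have h1 := hφ x'
      have h2 := sat_nonneg (h (Fin.snoc x' (φ x')) (Fin.last n))
      nlinarith [hd (Fin.last n)]
    have hφ1 : ∀ x', φ x' ≤ 1 / d (Fin.last n) := by
      intro x'
      have h1 := hφ x'
      have h2 := sat_le_one (h (Fin.snoc x' (φ x')) (Fin.last n))
      rw [le_div_iff₀ (hd (Fin.last n))]
      nlinarith
    -- continuity of φ
    have hφc : Continuous φ := by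
      rw [continuous_iff_seqContinuous]
      intro u x hu
      refine Filter.tendsto_of_subseq_tendsto fun ns hns => ?_
      have hmem : ∀ k, φ (u (ns k)) ∈ Set.Icc (0:ℝ) (1 / d (Fin.last n)) :=
        fun k => ⟨hφ0 _, hφ1 _⟩
      obtain ⟨t0, _, ms, hms, hlim⟩ :=
        tendsto_subseq_of_bounded (isCompact_Icc (a := (0:ℝ)) (b := 1 / d (Fin.last n))).isBounded hmem
      refine ⟨ms, ?_⟩
      have hux : Filter.Tendsto (fun k => u (ns (ms k))) Filter.atTop (nhds x) :=
        hu.comp (hns.comp hms.tendsto_atTop)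
      have hpair : Filter.Tendsto (fun k => (u (ns (ms k)), φ (u (ns (ms k)))))
          Filter.atTop (nhds (x, t0)) := hux.prodMk_nhds hlim
      have hsnoc : Filter.Tendsto
          (fun k => (Fin.snoc (u (ns (ms k))) (φ (u (ns (ms k)))) : Fin (n+1) → ℝ))
          Filter.atTop (nhds (Fin.snoc x t0)) := (hXc.tendsto _).comp hpair
      have h1 : Filter.Tendsto (fun k => d (Fin.last n) * φ (u (ns (ms k))))
          Filter.atTop (nhds (d (Fin.last n) * t0)) := tendsto_const_nhds.mul hlim
      have h2 : Filter.Tendsto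
          (fun k => sat (h (Fin.snoc (u (ns (ms k))) (φ (u (ns (ms k))))) (Fin.last n)))
          Filter.atTop (nhds (sat (h (Fin.snoc x t0) (Fin.last n)))) :=
        ((sat_continuous.comp ((continuous_apply (Fin.last n)).comp hc)).tendsto _).comp hsnoc
      have heq : d (Fin.last n) * t0 = sat (h (Fin.snoc x t0) (Fin.last n)) := by
        refine tendsto_nhds_unique h1 ?_
        have : (fun k => d (Fin.last n) * φ (u (ns (ms k))))
            = fun k => sat (h (Fin.snoc (u (ns (ms k))) (φ (u (ns (ms k))))) (Fin.last n)) := by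
          funext k; exact hφ _
        rw [this]
        exact h2
      have ht0 : t0 = φ x := scalar_uniq x t0 (φ x) heq (hφ x)
      rw [← ht0]
      exact hlim
    -- reduced system
    set d' : Fin n → ℝ := fun i => d i.castSucc with hd'
    set lam' : Fin n → ℝ := fun i => lam i.castSucc with hlam'
    set h' : (Fin n → ℝ) → Fin n → ℝ :=
      fun x' i => h (Fin.snoc x' (φ x')) i.castSucc with hh'
    have hc' : Continuous h' := by
      apply continuous_pi
      intro i
      exact (continuous_apply _).comp (hc.comp (hXc.comp (continuous_id.prodMk hφc)))
    have hQ' : ∀ x' y' : Fin n → ℝ, x' ≠ y' →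
        (∑ i, lam' i * (x' i - y' i) * ((h' x' i - h' y' i) - d' i * (x' i - y' i))) < 0 := by
      intro x' y' hne
      set x : Fin (n+1) → ℝ := Fin.snoc x' (φ x') with hx
      set y : Fin (n+1) → ℝ := Fin.snoc y' (φ y') with hy
      have hxy : x ≠ y := by
        intro e
        apply hne
        funext j
        have := congrFun e j.castSucc
        simpa [hx, hy, Fin.snoc_castSucc] using this
      have hfull := hQ x y hxy
      rw [Fin.sum_univ_castSucc] at hfull
      have hlast : 0 ≤ lam (Fin.last n) * (x (Fin.last n) - y (Fin.last n)) *
          ((h x (Fin.last n) - h y (Fin.last n)) - d (Fin.last n) * (x (Fin.last n) - y (Fin.last n))) := by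
        have hxl : x (Fin.last n) = φ x' := by simp [hx]
        have hyl : y (Fin.last n) = φ y' := by simp [hy]
        rw [hxl, hyl]
        exact key_nonneg (hd _) (hlam _) (hφ x') (hφ y')
      have hsum_eq : (∑ i, lam' i * (x' i - y' i) * ((h' x' i - h' y' i) - d' i * (x' i - y' i)))
          = ∑ i : Fin n, lam i.castSucc * (x i.castSucc - y i.castSucc) *
              ((h x i.castSucc - h y i.castSucc) - d i.castSucc * (x i.castSucc - y i.castSucc)) := by
        apply Finset.sum_congr rfl
        intro i _
        simp [hlam', hd', hh', hx, hy, Fin.snoc_castSucc]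
      rw [hsum_eq]
      linarith
    obtain ⟨x', hx'⟩ := IH d' lam' (fun i => hd _) (fun i => hlam _) h' hc' hQ'
    refine ⟨Fin.snoc x' (φ x'), ?_⟩
    intro i
    induction i using Fin.lastCases with
    | last =>
      simpa [Fin.snoc_last] using hφ x'
    | cast j =>
      have := hx' j
      simpa [hd', hh', Fin.snoc_castSucc] using this


/-- **Uniqueness of the LTN equilibrium under Lyapunov diagonal stability.**
If `A = W - D` is Lyapunov diagonally stable, any two solutions of
`Dx = [Wx + u]₀¹` coincide, and the LTN `ẋ = -Dx + [Wx + u]₀¹` admits exactly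
one equilibrium. -/
theorem LTN_equilibrium_unique
    (n : ℕ) (hn : 1 ≤ n)
    (d : Fin n → ℝ) (hd : ∀ i, 0 < d i)
    (W : Matrix (Fin n) (Fin n) ℝ) (u : Fin n → ℝ)
    (A : Matrix (Fin n) (Fin n) ℝ) (hA : A = W - Matrix.diagonal d)
    (hLDS : ∃ lam : Fin n → ℝ, (∀ i, 0 < lam i) ∧
      ∀ z : Fin n → ℝ, z ≠ 0 →
        z ⬝ᵥ ((Aᵀ * Matrix.diagonal lam + Matrix.diagonal lam * A) *ᵥ z) < 0) :
    (∀ x y : Fin n → ℝ,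
        (∀ i, d i * x i = sat ((W *ᵥ x + u) i)) →
        (∀ i, d i * y i = sat ((W *ᵥ y + u) i)) → x = y)
    ∧ ∃! x : Fin n → ℝ, ∀ i, d i * x i = sat ((W *ᵥ x + u) i) := by
  obtain ⟨lam, hlam, hneg⟩ := hLDS
  set h : (Fin n → ℝ) → Fin n → ℝ := fun x => W *ᵥ x + u with hh
  have hQ : ∀ x y : Fin n → ℝ, x ≠ y →
      (∑ i, lam i * (x i - y i) * ((h x i - h y i) - d i * (x i - y i))) < 0 := by
    intro x y hne
    have hz : x - y ≠ 0 := sub_ne_zero.2 hne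
    have h0 := hneg (x - y) hz
    have hAz : ∀ i, (A *ᵥ (x - y)) i = (h x i - h y i) - d i * (x i - y i) := by
      intro i
      rw [hA]
      simp [Matrix.sub_mulVec, Matrix.mulVec_sub, Matrix.mulVec_diagonal, hh]
      ring
    have hid : (x - y) ⬝ᵥ ((Aᵀ * Matrix.diagonal lam + Matrix.diagonal lam * A) *ᵥ (x - y))
        = 2 * ∑ i, lam i * (x i - y i) * ((A *ᵥ (x - y)) i) := by
      set z := x - y with hzdef
      rw [Matrix.add_mulVec, dotProduct_add, ← Matrix.mulVec_mulVec,
        ← Matrix.mulVec_mulVec, dotProduct_mulVec z Aᵀ, Matrix.vecMul_transpose]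
      simp only [dotProduct, Matrix.mulVec_diagonal]
      rw [← Finset.sum_add_distrib, Finset.mul_sum]
      apply Finset.sum_congr rfl
      intro i _
      rw [show z i = x i - y i from rfl]
      ring
    rw [hid] at h0
    have hsum : ∑ i, lam i * (x i - y i) * ((A *ᵥ (x - y)) i)
        = ∑ i, lam i * (x i - y i) * ((h x i - h y i) - d i * (x i - y i)) := by
      apply Finset.sum_congr rfl
      intro i _
      rw [hAz i]
    rw [hsum] at h0
    linarith
  have hcont : Continuous h := by
    apply continuous_pi
    intro i
    apply Continuous.add _ continuous_const
    have : Continuous fun x : Fin n → ℝ => ∑ j, W i j * x j :=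
      continuous_finset_sum _ fun j _ => continuous_const.mul (continuous_apply j)
    simpa [Matrix.mulVec, dotProduct] using this
  have huniq := master_uniq n d lam hd hlam h hQ
  obtain ⟨x, hx⟩ := master n d lam hd hlam h hcont hQ
  exact ⟨huniq, x, hx, fun y hy => huniq y x hy hx⟩
end

section
/- Let τ > 0 and x ∈ X. Then f_τ(x) = 0, where f_τ(x) = (1/τ)(-Dx + [Dx + τ(Ax + u)]_0^1), holds if and only if for every index i: (Ax + u)_i ≤ 0 whenever d_i x_i = 0, (Ax + u)_i = 0 whenever 0 < d_i x_i < 1, and (Ax + u)_i ≥ 0 whenever d_i x_i = 1. In particular, the equilibrium set of the τ-LTN family is independent of τ. -/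
open Matrix

/-- The τ-LTN vector field `f_τ(x) = (1/τ)(-Dx + [Dx + τ(Ax + u)]₀¹)`. -/
noncomputable def fTau (n : ℕ) (d : Fin n → ℝ) (A : Matrix (Fin n) (Fin n) ℝ)
    (u : Fin n → ℝ) (τ : ℝ) (x : Fin n → ℝ) : Fin n → ℝ :=
  τ⁻¹ • (-(Matrix.diagonal d *ᵥ x)
    + fun i => sat ((Matrix.diagonal d *ᵥ x + τ • (A *ᵥ x + u)) i))

lemma sat_fixed_iff (s t g : ℝ) (hs : s ∈ Set.Icc (0:ℝ) 1) (ht : 0 < t) :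
    sat (s + t * g) = s ↔
      (s = 0 → g ≤ 0) ∧ (0 < s → s < 1 → g = 0) ∧ (s = 1 → 0 ≤ g) := by
  obtain ⟨hs0, hs1⟩ := hs
  unfold sat
  constructor
  · intro h
    rcases le_total 0 (min (s + t * g) 1) with hm | hm
    · rw [max_eq_right hm] at h
      rcases le_total (s + t * g) 1 with h2 | h2
      · rw [min_eq_left h2] at h
        have hg : g = 0 := by nlinarith
        exact ⟨fun _ => hg.le, fun _ _ => hg, fun _ => hg.ge⟩
      · rw [min_eq_right h2] at h
        exact ⟨fun h0 => by linarith, fun _ h1 => by linarith,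
          fun _ => by nlinarith⟩
    · rw [max_eq_left hm] at h
      have hsg : s + t * g ≤ 0 := by
        rcases min_le_iff.mp hm with h' | h'
        · exact h'
        · linarith
      exact ⟨fun _ => by nlinarith, fun h0 _ => by linarith,
        fun h1 => by linarith⟩
  · rintro ⟨c0, cm, c1⟩
    rcases eq_or_lt_of_le hs0 with h0 | h0
    · have hg := c0 h0.symm
      rw [← h0, zero_add, max_eq_left (min_le_of_left_le (by nlinarith))]
    rcases eq_or_lt_of_le hs1 with h1 | h1
    · have hg := c1 h1
      rw [min_eq_right (by nlinarith), max_eq_right (by norm_num), h1]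
    · have := cm h0 h1
      rw [this, mul_zero, add_zero, min_eq_left h1.le, max_eq_right hs0]

/-- **τ-independence of the τ-LTN equilibrium conditions.**
For τ > 0 and x ∈ X, `f_τ(x) = 0` iff for each i: `(Ax+u)ᵢ ≤ 0` when `dᵢxᵢ = 0`,
`(Ax+u)ᵢ = 0` when `0 < dᵢxᵢ < 1`, and `(Ax+u)ᵢ ≥ 0` when `dᵢxᵢ = 1`. -/
theorem tau_LTN_equilibrium_characterization
    (n : ℕ) (hn : 1 ≤ n)
    (d : Fin n → ℝ) (hd : ∀ i, 0 < d i)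
    (W : Matrix (Fin n) (Fin n) ℝ) (u : Fin n → ℝ)
    (A : Matrix (Fin n) (Fin n) ℝ) (hA : A = W - Matrix.diagonal d)
    (τ : ℝ) (hτ : 0 < τ)
    (x : Fin n → ℝ) (hx : ∀ i, d i * x i ∈ Set.Icc (0:ℝ) 1) :
    fTau n d A u τ x = 0 ↔
      ∀ i, (d i * x i = 0 → (A *ᵥ x + u) i ≤ 0)
        ∧ (0 < d i * x i → d i * x i < 1 → (A *ᵥ x + u) i = 0)
        ∧ (d i * x i = 1 → 0 ≤ (A *ᵥ x + u) i) := by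
  rw [funext_iff]
  apply forall_congr'
  intro i
  have hτ' : τ⁻¹ ≠ 0 := by positivity
  simp only [fTau, Pi.smul_apply, Pi.add_apply, Pi.neg_apply, Pi.zero_apply,
    Matrix.mulVec_diagonal, smul_eq_mul]
  rw [mul_eq_zero]
  have key := sat_fixed_iff (d i * x i) τ ((A *ᵥ x + u) i) (hx i) hτ
  simp only [Pi.add_apply] at key
  constructor
  · rintro (h | h)
    · exact absurd h hτ'
    · exact key.mp (by linarith)
  · intro h
    right
    have := key.mpr h
    linarith
end

section
/- Suppose A = W - D is Lyapunov diagonally stable. Then for every τ > 0 there exists exactly one x ∈ X with f_τ(x) = 0, where f_τ(x) = (1/τ)(-Dx + [Dx + τ(Ax + u)]_0^1), and this unique equilibrium is the same point for all τ > 0. -/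
open Matrix

private lemma clamp_fix_iff (b y t : ℝ) (hb : 0 < b) :
    max 0 (min (y + t) b) = y ↔
      0 ≤ y ∧ y ≤ b ∧ (y < b → t ≤ 0) ∧ (0 < y → 0 ≤ t) := by
  constructor
  · intro h
    have h0 : 0 ≤ y := h ▸ le_max_left _ _
    have h1 : y ≤ b := h ▸ max_le hb.le (min_le_right _ _)
    refine ⟨h0, h1, ?_, ?_⟩
    · intro hyb
      rcases le_or_gt (y + t) b with h' | h'
      · rw [min_eq_left h'] at h
        have := h ▸ le_max_right 0 (y + t)
        linarith
      · rw [min_eq_right h'.le, max_eq_right hb.le] at h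
        linarith
    · intro hy
      rcases le_or_gt (min (y + t) b) 0 with h' | h'
      · rw [max_eq_left h'] at h; linarith
      · rw [max_eq_right h'.le] at h
        have := min_le_left (y + t) b
        linarith
  · rintro ⟨h0, h1, hi, hj⟩
    rcases eq_or_lt_of_le h1 with rfl | hyb
    · have ht : 0 ≤ t := hj hb
      rw [min_eq_right (by linarith), max_eq_right hb.le]
    · have ht : t ≤ 0 := hi hyb
      rcases eq_or_lt_of_le h0 with rfl | hy
      · rw [min_eq_left (by linarith), max_eq_left (by linarith)]
      · have ht' : 0 ≤ t := hj hy
        have : t = 0 := le_antisymm ht ht'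
        rw [this, add_zero, min_eq_left h1, max_eq_right h0]


/-- τ-independent complementarity characterization of equilibria. -/
private def IsEq (n : ℕ) (d : Fin n → ℝ) (A : Matrix (Fin n) (Fin n) ℝ)
    (u : Fin n → ℝ) (x : Fin n → ℝ) : Prop :=
  ∀ i, 0 ≤ d i * x i ∧ d i * x i ≤ 1 ∧
    (d i * x i < 1 → (A *ᵥ x + u) i ≤ 0) ∧
    (0 < d i * x i → 0 ≤ (A *ᵥ x + u) i)

private lemma fTau_zero_iff (n : ℕ) (d : Fin n → ℝ) (hd : ∀ i, 0 < d i)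
    (A : Matrix (Fin n) (Fin n) ℝ) (u : Fin n → ℝ) (τ : ℝ) (hτ : 0 < τ)
    (x : Fin n → ℝ) :
    fTau n d A u τ x = 0 ↔ IsEq n d A u x := by
  have hτ' : (τ:ℝ)⁻¹ ≠ 0 := inv_ne_zero hτ.ne'
  rw [fTau, smul_eq_zero]
  simp only [hτ', false_or]
  rw [funext_iff]
  constructor
  · intro h i
    have hi := h i
    have hrw : (A *ᵥ x + u) i = (A *ᵥ x) i + u i := rfl
    simp only [Pi.add_apply, Pi.neg_apply, Pi.zero_apply, Pi.smul_apply,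
      Matrix.mulVec_diagonal, smul_eq_mul, sat] at hi
    have : max 0 (min (d i * x i + τ * ((A *ᵥ x) i + u i)) 1) = d i * x i := by linarith
    rcases (clamp_fix_iff 1 (d i * x i) (τ * ((A *ᵥ x) i + u i)) one_pos).mp this
      with ⟨h0, h1, h2, h3⟩
    rw [hrw]
    exact ⟨h0, h1, fun hlt => by nlinarith [h2 hlt], fun hpos => by nlinarith [h3 hpos]⟩
  · intro h i
    rcases h i with ⟨h0, h1, h2, h3⟩
    have hrw : (A *ᵥ x + u) i = (A *ᵥ x) i + u i := rfl
    rw [hrw] at h2 h3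
    have : max 0 (min (d i * x i + τ * ((A *ᵥ x) i + u i)) 1) = d i * x i := by
      refine (clamp_fix_iff 1 (d i * x i) (τ * ((A *ᵥ x) i + u i)) one_pos).mpr
        ⟨h0, h1, fun hlt => mul_nonpos_of_nonneg_of_nonpos hτ.le (h2 hlt),
         fun hpos => mul_nonneg hτ.le (h3 hpos)⟩
    simp only [Pi.add_apply, Pi.neg_apply, Pi.zero_apply, Pi.smul_apply,
      Matrix.mulVec_diagonal, smul_eq_mul, sat]
    linarith

private lemma quad_identity (n : ℕ) (A : Matrix (Fin n) (Fin n) ℝ)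
    (lam : Fin n → ℝ) (z : Fin n → ℝ) :
    z ⬝ᵥ ((Aᵀ * Matrix.diagonal lam + Matrix.diagonal lam * A) *ᵥ z)
      = 2 * ∑ i, lam i * (z i * (A *ᵥ z) i) := by
  rw [Matrix.add_mulVec, dotProduct_add, ← Matrix.mulVec_mulVec,
    ← Matrix.mulVec_mulVec, Matrix.dotProduct_mulVec (v := z) (A := Aᵀ),
    Matrix.vecMul_transpose]
  simp only [dotProduct, Matrix.mulVec_diagonal]
  rw [two_mul]
  congr 1 <;> exact Finset.sum_congr rfl fun i _ => by ring

private lemma isEq_unique (n : ℕ) (d : Fin n → ℝ) (hd : ∀ i, 0 < d i)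
    (A : Matrix (Fin n) (Fin n) ℝ) (u : Fin n → ℝ)
    (lam : Fin n → ℝ) (hlam : ∀ i, 0 < lam i)
    (hq : ∀ z : Fin n → ℝ, z ≠ 0 →
      z ⬝ᵥ ((Aᵀ * Matrix.diagonal lam + Matrix.diagonal lam * A) *ᵥ z) < 0)
    (x y : Fin n → ℝ) (hx : IsEq n d A u x) (hy : IsEq n d A u y) : x = y := by
  by_contra hne
  have hz : x - y ≠ 0 := sub_ne_zero.mpr hne
  have hterm : ∀ i, 0 ≤ lam i * ((x - y) i * (A *ᵥ (x - y)) i) := by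
    intro i
    rcases hx i with ⟨hx0, hx1, hx2, hx3⟩
    rcases hy i with ⟨hy0, hy1, hy2, hy3⟩
    have hAz : (A *ᵥ (x - y)) i = ((A *ᵥ x + u) i) - ((A *ᵥ y + u) i) := by
      rw [Matrix.mulVec_sub]
      show (A *ᵥ x) i - (A *ᵥ y) i = ((A *ᵥ x) i + u i) - ((A *ᵥ y) i + u i)
      ring
    have hsub : (x - y) i = x i - y i := rfl
    rw [hAz, hsub]
    set gx := (A *ᵥ x + u) i
    set gy := (A *ᵥ y + u) i
    have hdi := hd i
    have hli := (hlam i).le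
    rcases lt_trichotomy (d i * x i) (d i * y i) with hlt | heq | hgt
    · have hgx : gx ≤ 0 := hx2 (by linarith)
      have hgy : 0 ≤ gy := hy3 (by linarith)
      have hxy : x i - y i ≤ 0 := by nlinarith
      exact mul_nonneg hli (mul_nonneg_iff.mpr (Or.inr ⟨hxy, by linarith⟩))
    · have : x i = y i := by
        have := mul_left_cancel₀ hdi.ne' heq
        exact this
      rw [this, sub_self, zero_mul, mul_zero]
    · have hgy : gy ≤ 0 := hy2 (by linarith)
      have hgx : 0 ≤ gx := hx3 (by linarith)
      have hxy : 0 ≤ x i - y i := by nlinarith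
      exact mul_nonneg hli (mul_nonneg hxy (by linarith))
  have hsum : 0 ≤ ∑ i, lam i * ((x - y) i * (A *ᵥ (x - y)) i) :=
    Finset.sum_nonneg fun i _ => hterm i
  have := hq (x - y) hz
  rw [quad_identity] at this
  linarith

private lemma sq_le_imp (a b : ℝ) (ha : 0 ≤ a) (hb : 0 ≤ b) (h : a ^ 2 ≤ b ^ 2) : a ≤ b := by
  have := Real.sqrt_le_sqrt h
  rwa [Real.sqrt_sq ha, Real.sqrt_sq hb] at this

private lemma clamp_lipschitz (b a a' : ℝ) :
    |max 0 (min a b) - max 0 (min a' b)| ≤ |a - a'| := by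
  have h1 : |max 0 (min a b) - max 0 (min a' b)| ≤ |min a b - min a' b| := by
    have h := abs_max_sub_max_le_abs (min a b) (min a' b) 0
    rwa [max_comm (min a b) 0, max_comm (min a' b) 0] at h
  have h2 : |min a b - min a' b| ≤ |a - a'| := by
    have h := abs_min_sub_min_le_max a b a' b
    rwa [sub_self, abs_zero, max_eq_left (abs_nonneg _)] at h
  exact h1.trans h2

set_option maxHeartbeats 2000000 in
private lemma exists_isEq (n : ℕ) (hn : 1 ≤ n) (d : Fin n → ℝ) (hd : ∀ i, 0 < d i)
    (A : Matrix (Fin n) (Fin n) ℝ) (u : Fin n → ℝ)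
    (lam : Fin n → ℝ) (hlam : ∀ i, 0 < lam i)
    (hq : ∀ z : Fin n → ℝ, z ≠ 0 →
      z ⬝ᵥ ((Aᵀ * Matrix.diagonal lam + Matrix.diagonal lam * A) *ᵥ z) < 0) :
    ∃ x : Fin n → ℝ, IsEq n d A u x := by
  classical
  haveI : Nonempty (Fin n) := ⟨⟨0, hn⟩⟩
  haveI : Nonempty (EuclideanSpace ℝ (Fin n)) := ⟨0⟩
  set Q : (Fin n → ℝ) → ℝ :=
    fun z => z ⬝ᵥ ((Aᵀ * Matrix.diagonal lam + Matrix.diagonal lam * A) *ᵥ z) with hQdef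
  have happly : ∀ i : Fin n, Continuous fun z : EuclideanSpace ℝ (Fin n) => z i :=
    fun i => (continuous_apply i).comp (PiLp.continuous_ofLp (p := 2) (β := fun _ : Fin n => ℝ))
  have hQc : Continuous fun z : EuclideanSpace ℝ (Fin n) => Q z := by
    simp only [hQdef, dotProduct, Matrix.mulVec]
    exact continuous_finset_sum _ fun i _ => (happly i).mul
      (continuous_finset_sum _ fun j _ => continuous_const.mul (happly j))
  have hSne : (Metric.sphere (0 : EuclideanSpace ℝ (Fin n)) 1).Nonempty := by
    refine ⟨EuclideanSpace.single ⟨0, hn⟩ (1:ℝ), ?_⟩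
    rw [mem_sphere_zero_iff_norm, EuclideanSpace.norm_single, norm_one]
  obtain ⟨z0, hz0S, hz0max⟩ :=
    (isCompact_sphere (0 : EuclideanSpace ℝ (Fin n)) 1).exists_isMaxOn hSne hQc.continuousOn
  have hz0norm : ‖z0‖ = 1 := mem_sphere_zero_iff_norm.mp hz0S
  have hz0ne : z0 ≠ 0 := by
    intro h; rw [h, norm_zero] at hz0norm; exact one_ne_zero hz0norm.symm
  have hQ0neg : Q z0 < 0 := hq z0 (mt (WithLp.ofLp_eq_zero 2).mp hz0ne)
  have hQhom : ∀ (s : ℝ) (w : Fin n → ℝ), Q (s • w) = s ^ 2 * Q w := by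
    intro s w
    simp only [hQdef, Matrix.mulVec_smul, dotProduct_smul,
      smul_dotProduct, smul_eq_mul]
    ring
  have hQb : ∀ z : EuclideanSpace ℝ (Fin n), Q z ≤ Q z0 * ‖z‖ ^ 2 := by
    intro z
    rcases eq_or_ne z 0 with rfl | hz
    · have h0 : Q (0 : Fin n → ℝ) = 0 := by simp [hQdef]
      rw [norm_zero]
      simpa using h0.le
    · have hnz : ‖z‖ ≠ 0 := norm_ne_zero_iff.mpr hz
      have hw : (‖z‖⁻¹ • z) ∈ Metric.sphere (0 : EuclideanSpace ℝ (Fin n)) 1 := by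
        rw [mem_sphere_zero_iff_norm, norm_smul, norm_inv, norm_norm,
          inv_mul_cancel₀ hnz]
      have h1 : Q (‖z‖⁻¹ • z) ≤ Q z0 := hz0max hw
      have h2 : Q z = ‖z‖ ^ 2 * Q (‖z‖⁻¹ • z) := by
        conv_lhs => rw [← smul_inv_smul₀ hnz z]
        exact hQhom _ _
      nlinarith [sq_nonneg ‖z‖]
  set c : ℝ := -Q z0 with hc
  have hcpos : 0 < c := by rw [hc]; linarith
  have hsumb : ∀ z : EuclideanSpace ℝ (Fin n),
      ∑ i, lam i * (z i * (A *ᵥ z) i) ≤ -(c/2) * ‖z‖ ^ 2 := by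
    intro z
    have h1 := hQb z
    have h2 : Q z = 2 * ∑ i, lam i * (z i * (A *ᵥ z) i) := quad_identity n A lam z
    nlinarith [sq_nonneg ‖z‖]
  -- operator norm bound
  set B := Matrix.diagonal lam * A with hB
  have hBapp : ∀ (v : Fin n → ℝ) (i : Fin n), (B *ᵥ v) i = lam i * (A *ᵥ v) i := by
    intro v i
    rw [hB, ← Matrix.mulVec_mulVec, Matrix.mulVec_diagonal]
  set L := LinearMap.toContinuousLinearMap (Matrix.toEuclideanLin B) with hL
  set K : ℝ := ‖L‖ with hKdef
  have hK0 : 0 ≤ K := norm_nonneg _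
  have hKb : ∀ z : EuclideanSpace ℝ (Fin n),
      ‖((WithLp.equiv 2 (Fin n → ℝ)).symm (B *ᵥ z) : EuclideanSpace ℝ (Fin n))‖ ≤ K * ‖z‖ := by
    intro z
    have h := L.le_opNorm z
    rw [hL, LinearMap.coe_toContinuousLinearMap', Matrix.toEuclideanLin_apply] at h
    exact h
  -- parameters
  set c0 : ℝ := min (c/2) 1 with hc0
  have hc0pos : 0 < c0 := lt_min (by linarith) one_pos
  have hc0le : c0 ≤ 1 := min_le_right _ _
  set ρ : ℝ := c0 / (K ^ 2 + 1) with hρdef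
  have hρ : 0 < ρ := div_pos hc0pos (by positivity)
  have hρK : ρ * K ^ 2 ≤ c0 := by
    rw [hρdef, div_mul_eq_mul_div, div_le_iff₀ (by positivity)]
    nlinarith [hc0pos]
  have hρc : ρ * c0 ≤ 1 := by
    rw [hρdef, div_mul_eq_mul_div, div_le_one (by positivity)]
    nlinarith [sq_nonneg K]
  have h1mc : 0 ≤ 1 - ρ * c0 := by linarith
  -- the contraction map
  set T : EuclideanSpace ℝ (Fin n) → EuclideanSpace ℝ (Fin n) := fun x =>
    (WithLp.equiv 2 (Fin n → ℝ)).symm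
      (fun i => max 0 (min (x i + ρ * (lam i * ((A *ᵥ x + u) i))) (1 / d i))) with hT
  have hTapp : ∀ (x : EuclideanSpace ℝ (Fin n)) (i : Fin n),
      T x i = max 0 (min (x i + ρ * (lam i * ((A *ᵥ x + u) i))) (1 / d i)) := fun _ _ => rfl
  have key : ∀ x y : EuclideanSpace ℝ (Fin n),
      ‖T x - T y‖ ≤ Real.sqrt (1 - ρ * c0) * ‖x - y‖ := by
    intro x y
    set z : EuclideanSpace ℝ (Fin n) := x - y with hz
    set w : EuclideanSpace ℝ (Fin n) := (WithLp.equiv 2 (Fin n → ℝ)).symm (B *ᵥ z) with hw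
    have hwi : ∀ i, w i = lam i * (A *ᵥ z) i := fun i => hBapp z i
    have hzi : ∀ i, z i = x i - y i := fun i => rfl
    have hAzi : ∀ i, (A *ᵥ z) i = (A *ᵥ x + u) i - (A *ᵥ y + u) i := by
      intro i
      show (A *ᵥ z) i = ((A *ᵥ x) i + u i) - ((A *ᵥ y) i + u i)
      have h : (A *ᵥ z : Fin n → ℝ) i = (A *ᵥ x) i - (A *ᵥ y) i := by
        simp only [Matrix.mulVec, dotProduct]
        rw [← Finset.sum_sub_distrib]
        apply Finset.sum_congr rfl
        intro j _
        rw [hzi j]; ring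
      rw [h]; ring
    have hcoord : ∀ i, |(T x - T y) i| ≤ |(z + ρ • w) i| := by
      intro i
      have h1 : (T x - T y) i = T x i - T y i := rfl
      have h2 : (z + ρ • w) i = z i + ρ * w i := rfl
      rw [h1, h2, hTapp, hTapp]
      have h3 : z i + ρ * w i =
          (x i + ρ * (lam i * ((A *ᵥ x + u) i))) - (y i + ρ * (lam i * ((A *ᵥ y + u) i))) := by
        rw [hwi, hAzi, hzi]; ring
      rw [h3]
      exact clamp_lipschitz (1 / d i) _ _
    have hsq : ‖T x - T y‖ ^ 2 ≤ ‖z + ρ • w‖ ^ 2 := by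
      rw [EuclideanSpace.norm_eq, EuclideanSpace.norm_eq,
        Real.sq_sqrt (by positivity), Real.sq_sqrt (by positivity)]
      apply Finset.sum_le_sum
      intro i _
      rw [Real.norm_eq_abs, Real.norm_eq_abs]
      exact pow_le_pow_left₀ (abs_nonneg _) (hcoord i) 2
    have hiw : (inner ℝ z w : ℝ) ≤ -(c/2) * ‖z‖ ^ 2 := by
      have heq : (inner ℝ z w : ℝ) = ∑ i, lam i * (z i * (A *ᵥ z) i) := by
        rw [PiLp.inner_apply]
        refine Finset.sum_congr rfl fun i _ => ?_
        rw [RCLike.inner_apply, hwi]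
        simp only [starRingEnd_apply, star_trivial]
        ring
      rw [heq]
      exact hsumb z
    have hwn : ‖w‖ ≤ K * ‖z‖ := hKb z
    have hvsq : ‖z + ρ • w‖ ^ 2 ≤ (1 - ρ * c0) * ‖z‖ ^ 2 := by
      rw [norm_add_sq_real, real_inner_smul_right, norm_smul, Real.norm_eq_abs,
        abs_of_pos hρ]
      have hw2 : ‖w‖ ^ 2 ≤ K ^ 2 * ‖z‖ ^ 2 := by nlinarith [norm_nonneg w, norm_nonneg z]
      have hiw2 : (inner ℝ z w : ℝ) ≤ -c0 * ‖z‖ ^ 2 := by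
        have hcc : c0 ≤ c/2 := min_le_left _ _
        nlinarith [sq_nonneg ‖z‖]
      rw [mul_pow]
      have t1 : ρ * (inner ℝ z w : ℝ) ≤ ρ * (-c0 * ‖z‖ ^ 2) :=
        mul_le_mul_of_nonneg_left hiw2 hρ.le
      have t2 : ρ ^ 2 * ‖w‖ ^ 2 ≤ ρ ^ 2 * (K ^ 2 * ‖z‖ ^ 2) :=
        mul_le_mul_of_nonneg_left hw2 (by positivity)
      have t3 : ρ * K ^ 2 * ‖z‖ ^ 2 ≤ c0 * ‖z‖ ^ 2 :=
        mul_le_mul_of_nonneg_right hρK (sq_nonneg _)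
      have t4 : ρ * (ρ * K ^ 2 * ‖z‖ ^ 2) ≤ ρ * (c0 * ‖z‖ ^ 2) :=
        mul_le_mul_of_nonneg_left t3 hρ.le
      nlinarith [t1, t2, t4]
    have hfin : ‖T x - T y‖ ^ 2 ≤ (Real.sqrt (1 - ρ * c0) * ‖x - y‖) ^ 2 := by
      rw [mul_pow, Real.sq_sqrt h1mc, ← hz]
      exact hsq.trans hvsq
    exact sq_le_imp _ _ (norm_nonneg _) (by positivity) hfin
  -- Banach fixed point
  set k : NNReal := ⟨Real.sqrt (1 - ρ * c0), Real.sqrt_nonneg _⟩ with hk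
  have hk1 : k < 1 := by
    rw [← NNReal.coe_lt_coe]
    show Real.sqrt (1 - ρ * c0) < 1
    have hlt : 1 - ρ * c0 < 1 := by nlinarith
    calc Real.sqrt (1 - ρ * c0) < Real.sqrt 1 := Real.sqrt_lt_sqrt h1mc hlt
    _ = 1 := Real.sqrt_one
  have hcontr : ContractingWith k T := by
    refine ⟨hk1, LipschitzWith.of_dist_le_mul fun x y => ?_⟩
    rw [dist_eq_norm, dist_eq_norm]
    exact key x y
  set xs : EuclideanSpace ℝ (Fin n) := ContractingWith.fixedPoint T hcontr with hxs
  have hfix : T xs = xs := hcontr.fixedPoint_isFixedPt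
  refine ⟨xs, fun i => ?_⟩
  have hfi : max 0 (min (xs i + ρ * (lam i * ((A *ᵥ xs + u) i))) (1 / d i)) = xs i := by
    have h := congrArg (fun v => v i) hfix
    rw [hTapp] at h
    exact h
  have hb : 0 < 1 / d i := one_div_pos.mpr (hd i)
  rcases (clamp_fix_iff (1 / d i) (xs i) (ρ * (lam i * ((A *ᵥ xs + u) i))) hb).mp hfi
    with ⟨h0, h1, h2, h3⟩
  have hdi := hd i
  have hli := hlam i
  refine ⟨mul_nonneg hdi.le h0, ?_, ?_, ?_⟩
  · rw [le_div_iff₀ hdi] at h1; linarith [h1]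
  · intro hlt
    have hx : xs i < 1 / d i := by rw [lt_div_iff₀ hdi]; linarith
    have hle := h2 hx
    by_contra hgt
    push_neg at hgt
    have : 0 < ρ * (lam i * (A *ᵥ xs + u) i) := mul_pos hρ (mul_pos hli hgt)
    linarith
  · intro hpos
    have hx : 0 < xs i := by nlinarith
    have hge := h3 hx
    by_contra hgt
    push_neg at hgt
    have : ρ * (lam i * (A *ᵥ xs + u) i) < 0 :=
      mul_neg_of_pos_of_neg hρ (mul_neg_of_pos_of_neg hli hgt)
    linarith

/-- **Common unique equilibrium of the τ-LTN family under LDS.**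
If `A = W - D` is Lyapunov diagonally stable, there is a point `x⋆ ∈ X` that
for every `τ > 0` is the unique zero of `f_τ` in `X`. -/
theorem tau_LTN_common_unique_equilibrium
    (n : ℕ) (hn : 1 ≤ n)
    (d : Fin n → ℝ) (hd : ∀ i, 0 < d i)
    (W : Matrix (Fin n) (Fin n) ℝ) (u : Fin n → ℝ)
    (A : Matrix (Fin n) (Fin n) ℝ) (hA : A = W - Matrix.diagonal d)
    (hLDS : ∃ lam : Fin n → ℝ, (∀ i, 0 < lam i) ∧
      ∀ z : Fin n → ℝ, z ≠ 0 →
        z ⬝ᵥ ((Aᵀ * Matrix.diagonal lam + Matrix.diagonal lam * A) *ᵥ z) < 0) :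
    ∃ xstar : Fin n → ℝ, (∀ i, d i * xstar i ∈ Set.Icc (0:ℝ) 1) ∧
      ∀ τ : ℝ, 0 < τ →
        fTau n d A u τ xstar = 0 ∧
        ∀ x : Fin n → ℝ, (∀ i, d i * x i ∈ Set.Icc (0:ℝ) 1) →
          fTau n d A u τ x = 0 → x = xstar := by
  obtain ⟨lam, hlam, hq⟩ := hLDS
  obtain ⟨xstar, hstar⟩ := exists_isEq n hn d hd A u lam hlam hq
  refine ⟨xstar, fun i => ⟨(hstar i).1, (hstar i).2.1⟩, fun τ hτ => ?_⟩
  refine ⟨(fTau_zero_iff n d hd A u τ hτ xstar).mpr hstar, fun x _ hzero => ?_⟩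
  exact isEq_unique n d hd A u lam hlam hq x xstar
    ((fTau_zero_iff n d hd A u τ hτ x).mp hzero) hstar
end

section
/- For every x ∈ X, the τ-LTN vector field f_τ(x) = (1/τ)(-Dx + [Dx + τ(Ax + u)]_0^1) converges, as τ → 0⁺, to the vector P(x, Ax + u) whose i-th component equals max((Ax+u)_i, 0) if d_i x_i = 0, equals (Ax+u)_i if 0 < d_i x_i < 1, and equals min((Ax+u)_i, 0) if d_i x_i = 1. -/
open Matrix Filter Topology
open scoped Classical

/-- Componentwise projection of `v` onto the tangent cone of `X` at `x`. -/
noncomputable def projX (n : ℕ) (d : Fin n → ℝ) (x v : Fin n → ℝ) : Fin n → ℝ :=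
  fun i =>
    if d i * x i = 0 then max (v i) 0
    else if d i * x i = 1 then min (v i) 0
    else v i

/-- **Fast limit of the τ-LTN family is the projected dynamical system.**
For every `x ∈ X`, `f_τ(x) → Π_X(x, Ax + u)` as `τ → 0⁺`. -/
theorem fast_limit_is_PDS
    (n : ℕ) (hn : 1 ≤ n)
    (d : Fin n → ℝ) (hd : ∀ i, 0 < d i)
    (W : Matrix (Fin n) (Fin n) ℝ) (u : Fin n → ℝ)
    (A : Matrix (Fin n) (Fin n) ℝ) (hA : A = W - Matrix.diagonal d)
    (x : Fin n → ℝ) (hx : ∀ i, d i * x i ∈ Set.Icc (0:ℝ) 1) :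
    Tendsto (fun τ : ℝ => fTau n d A u τ x) (𝓝[>] 0)
      (𝓝 (projX n d x (A *ᵥ x + u))) := by
  rw [tendsto_pi_nhds]
  intro i
  set a := (A *ᵥ x + u) i with ha
  set s := d i * x i with hs
  have hsd : (Matrix.diagonal d *ᵥ x) i = s := by
    simp [Matrix.mulVec_diagonal, hs]
  have key : ∀ τ : ℝ, fTau n d A u τ x i
      = τ⁻¹ * (-s + sat (s + τ * a)) := by
    intro τ
    have harg : (Matrix.diagonal d *ᵥ x + τ • (A *ᵥ x + u)) i = s + τ * a := by
      rw [Pi.add_apply, hsd, Pi.smul_apply, ← ha, smul_eq_mul]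
    show τ⁻¹ * ((-(Matrix.diagonal d *ᵥ x)) i
        + sat ((Matrix.diagonal d *ᵥ x + τ • (A *ᵥ x + u)) i)) = _
    rw [harg, Pi.neg_apply, hsd]
  have habs : (0:ℝ) < |a| + 1 := by positivity
  apply Tendsto.congr' _ tendsto_const_nhds
  by_cases h0 : s = 0
  · have hproj : projX n d x (A *ᵥ x + u) i = max a 0 := by
      unfold projX; rw [← hs, if_pos h0, ← ha]
    have hδ : (0:ℝ) < (|a| + 1)⁻¹ := by positivity
    filter_upwards [Ioo_mem_nhdsGT_of_mem (Set.mem_Ico.2 ⟨le_refl 0, hδ⟩)] with τ hτ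
    obtain ⟨hτ0, hτδ⟩ := hτ
    have hta : τ * a ≤ 1 := by
      calc τ * a ≤ τ * (|a| + 1) := by
            apply mul_le_mul_of_nonneg_left _ hτ0.le
            linarith [le_abs_self a]
        _ ≤ (|a| + 1)⁻¹ * (|a| + 1) := by nlinarith
        _ = 1 := inv_mul_cancel₀ habs.ne'
    have hsat : sat (s + τ * a) = τ * max a 0 := by
      rw [sat, h0, zero_add, min_eq_left hta]
      rw [mul_max_of_nonneg _ _ hτ0.le, mul_zero, max_comm]
    rw [hproj, key, hsat, h0, neg_zero, zero_add, ← mul_assoc,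
      inv_mul_cancel₀ hτ0.ne', one_mul]
  · by_cases h1 : s = 1
    · have hproj : projX n d x (A *ᵥ x + u) i = min a 0 := by
        unfold projX; rw [← hs, if_neg h0, if_pos h1, ← ha]
      have hδ : (0:ℝ) < (|a| + 1)⁻¹ := by positivity
      filter_upwards [Ioo_mem_nhdsGT_of_mem (Set.mem_Ico.2 ⟨le_refl 0, hδ⟩)] with τ hτ
      obtain ⟨hτ0, hτδ⟩ := hτ
      have hub : τ * (|a| + 1) ≤ 1 := by
        calc τ * (|a| + 1) ≤ (|a| + 1)⁻¹ * (|a| + 1) := by nlinarith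
          _ = 1 := inv_mul_cancel₀ habs.ne'
      have hsat : sat (s + τ * a) = 1 + τ * min a 0 := by
        rw [sat, h1]
        have h2 : min (1 + τ * a) 1 = 1 + τ * min a 0 := by
          rw [mul_min_of_nonneg _ _ hτ0.le, mul_zero, ← min_add_add_left, add_zero]
        rw [h2]
        have hge : 0 ≤ 1 + τ * min a 0 := by
          rcases le_total a 0 with hc | hc
          · rw [min_eq_left hc]
            nlinarith [neg_abs_le a, abs_nonneg a]
          · rw [min_eq_right hc]; norm_num
        exact max_eq_right hge
      rw [hproj, key, hsat, h1]
      field_simp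
      ring
    · have hproj : projX n d x (A *ᵥ x + u) i = a := by
        unfold projX; rw [← hs, if_neg h0, if_neg h1, ← ha]
      have hs0 : 0 < s := lt_of_le_of_ne (hx i).1 (Ne.symm h0)
      have hs1 : s < 1 := lt_of_le_of_ne (hx i).2 h1
      set δ := min s (1 - s) * (|a| + 1)⁻¹ with hδdef
      have hδ : (0:ℝ) < δ :=
        mul_pos (lt_min hs0 (by linarith)) (by positivity)
      filter_upwards [Ioo_mem_nhdsGT_of_mem (Set.mem_Ico.2 ⟨le_refl 0, hδ⟩)] with τ hτ
      obtain ⟨hτ0, hτδ⟩ := hτ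
      have habs2 : |τ * a| < min s (1 - s) := by
        rw [abs_mul, abs_of_pos hτ0]
        calc τ * |a| ≤ τ * (|a| + 1) := by nlinarith
          _ < δ * (|a| + 1) := mul_lt_mul_of_pos_right hτδ habs
          _ = min s (1 - s) := by
              rw [hδdef, mul_assoc, inv_mul_cancel₀ habs.ne', mul_one]
      have hlow : 0 ≤ s + τ * a := by
        have h2 := neg_abs_le (τ * a)
        have h3 := lt_of_lt_of_le habs2 (min_le_left _ _)
        linarith
      have hup : s + τ * a ≤ 1 := by
        have h2 := le_abs_self (τ * a)
        have h3 := lt_of_lt_of_le habs2 (min_le_right _ _)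
        linarith
      have hsat : sat (s + τ * a) = s + τ * a := by
        rw [sat, min_eq_left hup, max_eq_right hlow]
      rw [hproj, key, hsat]
      field_simp
      ring
end

section
/- A point x ∈ X satisfies P(x, Ax + u) = 0 (i.e., x is an equilibrium of the projected dynamical system ẋ = Π_X(x, Ax+u)) if and only if -Dx + [Wx + u]_0^1 = 0 (i.e., x is an equilibrium of the linear-threshold network). -/
open Matrix
open scoped Classical

lemma aux_scalar (s y : ℝ) (h0 : 0 ≤ s) (h1 : s ≤ 1) :
    (if s = 0 then max (y - s) 0 else if s = 1 then min (y - s) 0 else (y - s)) = 0 ↔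
      -s + sat y = 0 := by
  unfold sat
  split_ifs with hs hs1
  · subst hs
    simp only [sub_zero, neg_zero, zero_add]
    rw [max_comm y 0, max_eq_left_iff, max_eq_left_iff]
    constructor
    · intro h; exact le_trans (min_le_left _ _) h
    · intro h; rcases min_le_iff.mp h with h' | h' <;> linarith
  · subst hs1
    rw [min_comm, min_eq_left_iff]
    constructor
    · intro h
      rw [min_eq_right (by linarith : 1 ≤ y), max_eq_right zero_le_one]; ring
    · intro h
      have h1y : 1 ≤ y := by
        rcases le_total y 1 with hy | hy
        · rw [min_eq_left hy] at h
          rcases le_total y 0 with hy0 | hy0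
          · rw [max_eq_left hy0] at h; linarith
          · rw [max_eq_right hy0] at h; linarith
        · exact hy
      linarith
  · have hs0 : 0 < s := lt_of_le_of_ne h0 (Ne.symm hs)
    have hs1' : s < 1 := lt_of_le_of_ne h1 hs1
    constructor
    · intro hm
      have hy : y = s := by linarith [sub_eq_zero.mp hm]
      subst hy
      rw [min_eq_left h1, max_eq_right h0]; ring
    · intro hm
      have hy : max 0 (min y 1) = s := by linarith
      have h2 : min y 1 = s := by
        rcases le_total (min y 1) 0 with h' | h'
        · rw [max_eq_left h'] at hy; linarith
        · rw [max_eq_right h'] at hy; exact hy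
      have : y = s := by
        rcases le_total y 1 with h' | h'
        · rwa [min_eq_left h'] at h2
        · rw [min_eq_right h'] at h2; linarith
      rw [this]; ring

/-- **The PDS and the LTN share equilibria.** For `x ∈ X`,
`Π_X(x, Ax + u) = 0` iff `-Dx + [Wx + u]₀¹ = 0`. -/
theorem PDS_LTN_same_equilibria
    (n : ℕ) (hn : 1 ≤ n)
    (d : Fin n → ℝ) (hd : ∀ i, 0 < d i)
    (W : Matrix (Fin n) (Fin n) ℝ) (u : Fin n → ℝ)
    (A : Matrix (Fin n) (Fin n) ℝ) (hA : A = W - Matrix.diagonal d)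
    (x : Fin n → ℝ) (hx : ∀ i, d i * x i ∈ Set.Icc (0:ℝ) 1) :
    projX n d x (A *ᵥ x + u) = 0 ↔
      -(Matrix.diagonal d *ᵥ x) + (fun i => sat ((W *ᵥ x + u) i)) = 0 := by
  have key : ∀ i, (A *ᵥ x + u) i = (W *ᵥ x + u) i - d i * x i := by
    intro i
    subst hA
    simp [Matrix.sub_mulVec, Matrix.mulVec_diagonal, Pi.add_apply, Pi.sub_apply]
    ring
  simp only [funext_iff, Pi.zero_apply, Pi.add_apply, Pi.neg_apply]
  refine forall_congr' fun i => ?_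
  have hdiag : (Matrix.diagonal d *ᵥ x) i = d i * x i := Matrix.mulVec_diagonal d x i
  rw [hdiag, projX, key i]
  exact aux_scalar (d i * x i) ((W *ᵥ x + u) i) (hx i).1 (hx i).2
end

section
/- Suppose A = W - D is Lyapunov diagonally stable with positive diagonal certificate Λ, and set μ = -(1/2)·λ_max(Λ^{-1/2}(A^T Λ + Λ A)Λ^{-1/2}) > 0. Let x* ∈ X be the (unique) point satisfying -Dx* + [Wx* + u]_0^1 = 0. Let x : [0,∞) → X be absolutely continuous with derivative satisfying, for almost every t ≥ 0, ẋ(t) = P(x(t), A x(t) + u), where P(x,v)_i = max(v_i,0) if d_i x_i = 0, v_i if 0 < d_i x_i < 1, and min(v_i,0) if d_i x_i = 1. Then for all t ≥ 0, ‖x(t) - x*‖_Λ ≤ e^{-μ t} ‖x(0) - x*‖_Λ; i.e., x* is globally exponentially stable for the projected dynamical system. -/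
open Matrix MeasureTheory intervalIntegral
open scoped Classical

section Helpers

lemma rayleigh_le {n : ℕ} [NeZero n] (S : Matrix (Fin n) (Fin n) ℝ)
    (hSh : S.IsHermitian) (y : Fin n → ℝ) :
    y ⬝ᵥ (S *ᵥ y) ≤ (⨆ i, hSh.eigenvalues i) * (y ⬝ᵥ y) := by
  classical
  set U : Matrix (Fin n) (Fin n) ℝ := (hSh.eigenvectorUnitary : Matrix (Fin n) (Fin n) ℝ) with hU
  have hspec := hSh.spectral_theorem
  set w : Fin n → ℝ := (star U) *ᵥ y with hw
  have hUU : U * star U = 1 := Matrix.mem_unitaryGroup_iff.mp hSh.eigenvectorUnitary.2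
  have hstar : star U = Uᵀ := by
    ext i j
    simp [Matrix.star_eq_conjTranspose, Matrix.conjTranspose_apply]
  have hkey : ∀ q : Fin n → ℝ, y ⬝ᵥ (U *ᵥ q) = w ⬝ᵥ q := by
    intro q
    rw [Matrix.dotProduct_mulVec]
    congr 1
    rw [hw, hstar]
    rw [show U = Uᵀᵀ by rw [Matrix.transpose_transpose], Matrix.vecMul_transpose,
      Matrix.transpose_transpose]
  have hww : w ⬝ᵥ w = y ⬝ᵥ y := by
    have h1 : U *ᵥ w = y := by
      rw [hw, Matrix.mulVec_mulVec, hUU, Matrix.one_mulVec]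
    have := hkey w
    rw [h1] at this
    exact this.symm
  have hSy : y ⬝ᵥ (S *ᵥ y) = ∑ i, hSh.eigenvalues i * (w i * w i) := by
    conv_lhs => rw [hspec]
    rw [Unitary.conjStarAlgAut_apply, ← hU, ← Matrix.mulVec_mulVec, ← Matrix.mulVec_mulVec, hkey, ← hw]
    simp only [dotProduct, Matrix.mulVec_diagonal, Function.comp_apply]
    simp [RCLike.ofReal_real_eq_id]; congr 1; ext i; ring
  rw [hSy]
  have hbdd : BddAbove (Set.range hSh.eigenvalues) := (Set.finite_range _).bddAbove
  calc ∑ i, hSh.eigenvalues i * (w i * w i)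
      ≤ ∑ i, (⨆ j, hSh.eigenvalues j) * (w i * w i) := by
        apply Finset.sum_le_sum
        intro i _
        exact mul_le_mul_of_nonneg_right (le_ciSup hbdd i) (mul_self_nonneg _)
    _ = (⨆ j, hSh.eigenvalues j) * (y ⬝ᵥ y) := by
        rw [← Finset.mul_sum, ← hww]; rfl

lemma fubini_triangle {t : ℝ} {f g : ℝ → ℝ}
    (hf : IntegrableOn f (Set.Ioc 0 t)) (hg : IntegrableOn g (Set.Ioc 0 t)) :
    ∫ r in Set.Ioc 0 t, f r * (∫ s in Set.Ioc r t, g s)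
      = ∫ s in Set.Ioc 0 t, (∫ r in Set.Ioo 0 s, f r) * g s := by
  classical
  set μt := volume.restrict (Set.Ioc (0:ℝ) t) with hμt
  set k : ℝ → ℝ → ℝ := fun r s => if r < s then f r * g s else 0 with hk
  have hkint : Integrable (Function.uncurry k) (μt.prod μt) := by
    have h1 : Integrable (fun p : ℝ × ℝ => f p.1 * g p.2) (μt.prod μt) :=
      hf.mul_prod hg
    have h2 : MeasurableSet {p : ℝ × ℝ | p.1 < p.2} :=
      measurableSet_lt measurable_fst measurable_snd
    have h3 := h1.indicator h2
    have heq : Function.uncurry k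
        = Set.indicator {p : ℝ × ℝ | p.1 < p.2} (fun p => f p.1 * g p.2) := by
      ext p
      by_cases hp : p.1 < p.2 <;> simp [Function.uncurry, hk, Set.indicator_apply, hp]
    rw [heq]
    exact h3
  have hswap := MeasureTheory.integral_integral_swap hkint
  have hL : (∫ r, (∫ s, k r s ∂μt) ∂μt)
      = ∫ r in Set.Ioc 0 t, f r * (∫ s in Set.Ioc r t, g s) := by
    rw [hμt]
    apply setIntegral_congr_fun measurableSet_Ioc
    intro r hr
    show (∫ s, k r s ∂(volume.restrict (Set.Ioc 0 t))) = f r * ∫ s in Set.Ioc r t, g s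
    have heq : (fun s => k r s) = Set.indicator (Set.Ioi r) (fun s => f r * g s) := by
      ext s
      simp [hk, Set.indicator_apply, Set.mem_Ioi]
    rw [heq, MeasureTheory.integral_indicator measurableSet_Ioi]
    rw [Measure.restrict_restrict measurableSet_Ioi]
    have : Set.Ioi r ∩ Set.Ioc 0 t = Set.Ioc r t := by
      ext s
      simp only [Set.mem_inter_iff, Set.mem_Ioi, Set.mem_Ioc]
      constructor
      · rintro ⟨h1, _, h3⟩; exact ⟨h1, h3⟩
      · rintro ⟨h1, h2⟩; exact ⟨h1, lt_trans hr.1 h1, h2⟩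
    rw [this, MeasureTheory.integral_const_mul]
  have hR : (∫ s, (∫ r, k r s ∂μt) ∂μt)
      = ∫ s in Set.Ioc 0 t, (∫ r in Set.Ioo 0 s, f r) * g s := by
    rw [hμt]
    apply setIntegral_congr_fun measurableSet_Ioc
    intro s hs
    show (∫ r, k r s ∂(volume.restrict (Set.Ioc 0 t))) = (∫ r in Set.Ioo 0 s, f r) * g s
    have heq : (fun r => k r s) = Set.indicator (Set.Iio s) (fun r => f r * g s) := by
      ext r
      simp [hk, Set.indicator_apply, Set.mem_Iio]
    rw [heq, MeasureTheory.integral_indicator measurableSet_Iio]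
    rw [Measure.restrict_restrict measurableSet_Iio]
    have : Set.Iio s ∩ Set.Ioc 0 t = Set.Ioo 0 s := by
      ext r
      simp only [Set.mem_inter_iff, Set.mem_Iio, Set.mem_Ioc, Set.mem_Ioo]
      constructor
      · rintro ⟨h1, h2, _⟩; exact ⟨h2, h1⟩
      · rintro ⟨h1, h2⟩; exact ⟨h2, h1, le_trans (le_of_lt h2) hs.2⟩
    rw [this, MeasureTheory.integral_mul_const]
  rw [← hL, ← hR]
  exact hswap

lemma contOn_mul_integrable {t : ℝ} {φ f : ℝ → ℝ}
    (hφ : ContinuousOn φ (Set.Icc 0 t)) (hf : IntegrableOn f (Set.Ioc 0 t)) :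
    IntegrableOn (fun s => φ s * f s) (Set.Ioc 0 t) := by
  obtain ⟨C, hC⟩ := isCompact_Icc.exists_bound_of_continuousOn hφ
  apply hf.bdd_mul (c := C)
  · exact (hφ.aestronglyMeasurable measurableSet_Icc).mono_measure
      (Measure.restrict_mono Set.Ioc_subset_Icc_self le_rfl)
  · filter_upwards [ae_restrict_mem measurableSet_Ioc] with s hs
    exact hC s (Set.Ioc_subset_Icc_self hs)

lemma integral_exp_mul_Ioc (a : ℝ) {r t : ℝ} (hrt : r ≤ t) :
    ∫ s in Set.Ioc r t, a * Real.exp (a * s) = Real.exp (a * t) - Real.exp (a * r) := by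
  rw [← intervalIntegral.integral_of_le hrt]
  have : ∀ u ∈ Set.uIcc r t, HasDerivAt (fun s => Real.exp (a * s)) (a * Real.exp (a * u)) u := by
    intro u _
    have h1 : HasDerivAt (fun s : ℝ => a * s) a u := by
      simpa using (hasDerivAt_id u).const_mul a
    have := (Real.hasDerivAt_exp (a * u)).comp u h1
    exact this.congr_deriv (mul_comm _ _)
  rw [intervalIntegral.integral_eq_sub_of_hasDerivAt this]
  exact (Continuous.intervalIntegrable (by continuity) r t)

lemma primitive_sq {t : ℝ} {f : ℝ → ℝ} (hf : IntegrableOn f (Set.Ioc 0 t)) :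
    (∫ s in Set.Ioc 0 t, f s)^2
      = 2 * ∫ s in Set.Ioc 0 t, (∫ r in Set.Ioc 0 s, f r) * f s := by
  set F : ℝ → ℝ := fun s => ∫ r in Set.Ioc 0 s, f r with hF
  have h_icc : IntegrableOn f (Set.Icc 0 t) := by
    rw [integrableOn_Icc_iff_integrableOn_Ioc]; exact hf
  have hFc : ContinuousOn F (Set.Icc 0 t) := intervalIntegral.continuousOn_primitive h_icc
  have hFf : IntegrableOn (fun s => F s * f s) (Set.Ioc 0 t) := contOn_mul_integrable hFc hf
  have hfF : IntegrableOn (fun s => f s * F s) (Set.Ioc 0 t) := by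
    have : (fun s => f s * F s) = fun s => F s * f s := by ext s; ring
    rw [this]; exact hFf
  have key := fubini_triangle hf hf
  have hR : (∫ s in Set.Ioc 0 t, (∫ r in Set.Ioo 0 s, f r) * f s)
      = ∫ s in Set.Ioc 0 t, F s * f s := by
    apply setIntegral_congr_fun measurableSet_Ioc
    intro s _
    show (∫ r in Set.Ioo 0 s, f r) * f s = (∫ r in Set.Ioc 0 s, f r) * f s
    rw [integral_Ioc_eq_integral_Ioo]
  have hL : ∀ r ∈ Set.Ioc 0 t, f r * (∫ s in Set.Ioc r t, f s) = f r * F t - f r * F r := by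
    intro r hr
    have hsplit : F t = F r + ∫ s in Set.Ioc r t, f s := by
      rw [hF]
      rw [← MeasureTheory.setIntegral_union (Set.Ioc_disjoint_Ioc_of_le le_rfl) measurableSet_Ioc
        (hf.mono_set (Set.Ioc_subset_Ioc le_rfl hr.2))
        (hf.mono_set (Set.Ioc_subset_Ioc hr.1.le le_rfl)),
        Set.Ioc_union_Ioc_eq_Ioc hr.1.le hr.2]
    rw [show (∫ s in Set.Ioc r t, f s) = F t - F r by rw [hsplit]; ring]
    ring
  rw [setIntegral_congr_fun measurableSet_Ioc hL] at key
  rw [MeasureTheory.integral_sub (hf.mul_const (F t)) hfF] at key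
  rw [MeasureTheory.integral_mul_const] at key
  rw [hR] at key
  have hcomm : (∫ s in Set.Ioc 0 t, f s * F s) = ∫ s in Set.Ioc 0 t, F s * f s := by
    apply setIntegral_congr_fun measurableSet_Ioc; intro s _; ring
  rw [hcomm] at key
  have : (∫ s in Set.Ioc 0 t, f s) = F t := rfl
  rw [this]
  nlinarith [key]

lemma aux_nonpos {lam zw : ℝ} (hlam : 0 ≤ lam) (hzw : zw ≤ 0) : lam * (2 * zw) ≤ 0 :=
  mul_nonpos_iff.mpr (Or.inl ⟨hlam, by linarith⟩)

lemma aux_mono {lam a b : ℝ} (hlam : 0 ≤ lam) (h : a ≤ b) : lam * (2 * a) ≤ lam * (2 * b) := by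
  nlinarith

lemma aux_pos_cancel {d a : ℝ} (h : 0 ≤ d * a) (hd : 0 < d) : 0 ≤ a := by nlinarith

lemma aux_mul_nonneg_of_nonpos_nonpos {a b : ℝ} (ha : a ≤ 0) (hb : b ≤ 0) : 0 ≤ a * b := by
  nlinarith

end Helpers
/-- **Global exponential stability of the fast PDS limit under LDS.**
If `A = W - D` is Lyapunov diagonally stable with certificate Λ and
`μ = -(1/2) λ_max(Λ^{-1/2}(AᵀΛ + ΛA)Λ^{-1/2})`, then any absolutely continuous
solution of the projected dynamical system `ẋ = Π_X(x, Ax + u)` (encoded in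
integral form) satisfies `‖x(t) - x*‖_Λ ≤ e^{-μt}‖x(0) - x*‖_Λ` for all `t ≥ 0`,
where `x*` is the unique LTN equilibrium. -/
theorem PDS_global_exponential_stability
    (n : ℕ) (hn : 1 ≤ n)
    (d : Fin n → ℝ) (hd : ∀ i, 0 < d i)
    (W : Matrix (Fin n) (Fin n) ℝ) (u : Fin n → ℝ)
    (A : Matrix (Fin n) (Fin n) ℝ) (hA : A = W - Matrix.diagonal d)
    (lam : Fin n → ℝ) (hlam : ∀ i, 0 < lam i)
    (hneg : ∀ z : Fin n → ℝ, z ≠ 0 →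
      z ⬝ᵥ ((Aᵀ * Matrix.diagonal lam + Matrix.diagonal lam * A) *ᵥ z) < 0)
    (S : Matrix (Fin n) (Fin n) ℝ)
    (hS : S = Matrix.diagonal (fun i => (Real.sqrt (lam i))⁻¹)
        * (Aᵀ * Matrix.diagonal lam + Matrix.diagonal lam * A)
        * Matrix.diagonal (fun i => (Real.sqrt (lam i))⁻¹))
    (hSh : S.IsHermitian)
    (μ : ℝ) (hμ : μ = -(1/2) * (⨆ i, hSh.eigenvalues i))
    (xs : Fin n → ℝ) (hxsX : ∀ i, d i * xs i ∈ Set.Icc (0:ℝ) 1)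
    (hxs : -(Matrix.diagonal d *ᵥ xs) + (fun i => sat ((W *ᵥ xs + u) i)) = 0)
    (x : ℝ → Fin n → ℝ)
    (hxX : ∀ t : ℝ, 0 ≤ t → ∀ i, d i * x t i ∈ Set.Icc (0:ℝ) 1)
    (hint : ∀ t : ℝ, 0 ≤ t →
      IntervalIntegrable (fun s => projX n d (x s) (A *ᵥ x s + u)) volume 0 t)
    (hsol : ∀ t : ℝ, 0 ≤ t →
      x t = x 0 + ∫ s in (0:ℝ)..t, projX n d (x s) (A *ᵥ x s + u)) :
    ∀ t : ℝ, 0 ≤ t →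
      Real.sqrt (∑ i, lam i * (x t i - xs i) ^ 2)
        ≤ Real.exp (-μ * t) * Real.sqrt (∑ i, lam i * (x 0 i - xs i) ^ 2) := by
  have hnz : NeZero n := ⟨by omega⟩
  intro t ht
  set p : ℝ → Fin n → ℝ := fun s => projX n d (x s) (A *ᵥ x s + u) with hp
  have hpint : ∀ τ : ℝ, 0 ≤ τ → IntegrableOn p (Set.Ioc 0 τ) := fun τ hτ =>
    (intervalIntegrable_iff_integrableOn_Ioc_of_le hτ).mp (hint τ hτ)
  have hpiint : ∀ (τ : ℝ), 0 ≤ τ → ∀ i, IntegrableOn (fun s => p s i) (Set.Ioc 0 τ) := by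
    intro τ hτ i
    have := (ContinuousLinearMap.proj (R := ℝ) (φ := fun _ : Fin n => ℝ) i).integrable_comp
      (hpint τ hτ)
    simpa [IntegrableOn] using this
  have hcomp : ∀ τ : ℝ, 0 ≤ τ → ∀ i, x τ i = x 0 i + ∫ r in Set.Ioc 0 τ, p r i := by
    intro τ hτ i
    have h1 := hsol τ hτ
    have h2 : (∫ s in (0:ℝ)..τ, p s) = ∫ s in Set.Ioc 0 τ, p s :=
      intervalIntegral.integral_of_le hτ
    have h3 : (∫ s in Set.Ioc 0 τ, p s) i = ∫ s in Set.Ioc 0 τ, p s i := by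
      have := (ContinuousLinearMap.proj (R := ℝ) (φ := fun _ : Fin n => ℝ) i).integral_comp_comm
        (hpint τ hτ)
      simpa using this.symm
    calc x τ i = (x 0 + ∫ s in (0:ℝ)..τ, p s) i := by rw [← h1]
    _ = x 0 i + (∫ s in Set.Ioc 0 τ, p s) i := by rw [h2]; rfl
    _ = x 0 i + ∫ s in Set.Ioc 0 τ, p s i := by rw [h3]
  set F : Fin n → ℝ → ℝ := fun i s => ∫ r in Set.Ioc 0 s, p r i with hFdef
  have hFc : ∀ τ : ℝ, 0 ≤ τ → ∀ i, ContinuousOn (F i) (Set.Icc 0 τ) := by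
    intro τ hτ i
    apply intervalIntegral.continuousOn_primitive
    rw [integrableOn_Icc_iff_integrableOn_Ioc]
    exact hpiint τ hτ i
  have hxcont : ∀ τ : ℝ, 0 ≤ τ → ∀ i, ContinuousOn (fun s => x s i) (Set.Icc 0 τ) := by
    intro τ hτ i
    apply ContinuousOn.congr (continuousOn_const.add (hFc τ hτ i))
    intro s hs
    exact hcomp s hs.1 i
  set V : ℝ → ℝ := fun s => ∑ i, lam i * (x s i - xs i)^2 with hV
  set g : ℝ → ℝ := fun s => ∑ i, lam i * (2 * (x s i - xs i) * p s i) with hg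
  -- integrability of the terms of g
  have hterm : ∀ τ : ℝ, 0 ≤ τ → ∀ i,
      IntegrableOn (fun s => lam i * (2 * (x s i - xs i) * p s i)) (Set.Ioc 0 τ) := by
    intro τ hτ i
    have hφ : ContinuousOn (fun s => lam i * (2 * (x s i - xs i))) (Set.Icc 0 τ) := by
      apply continuousOn_const.mul
      exact continuousOn_const.mul ((hxcont τ hτ i).sub continuousOn_const)
    have h1 := contOn_mul_integrable hφ (hpiint τ hτ i)
    have heq : (fun s => lam i * (2 * (x s i - xs i) * p s i))
        = fun s => (lam i * (2 * (x s i - xs i))) * p s i := by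
      ext s; ring
    rw [heq]
    exact h1
  have hgint : ∀ τ : ℝ, 0 ≤ τ → IntegrableOn g (Set.Ioc 0 τ) := by
    intro τ hτ
    exact MeasureTheory.integrable_finset_sum _ (fun i _ => hterm τ hτ i)
  -- Stage 1 : integral identity for V
  have stage1 : ∀ τ : ℝ, 0 ≤ τ → V τ = V 0 + ∫ s in Set.Ioc 0 τ, g s := by
    intro τ hτ
    have hsum : (∫ s in Set.Ioc 0 τ, g s)
        = ∑ i, ∫ s in Set.Ioc 0 τ, lam i * (2 * (x s i - xs i) * p s i) := by
      rw [hg]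
      exact MeasureTheory.integral_finset_sum _ (fun i _ => hterm τ hτ i)
    rw [hsum, hV]
    rw [← Finset.sum_add_distrib]
    apply Finset.sum_congr rfl
    intro i _
    have hc : x τ i - xs i = (x 0 i - xs i) + F i τ := by
      rw [hcomp τ hτ i]; ring
    have hsq := primitive_sq (hpiint τ hτ i)
    have hFint : IntegrableOn (fun s => F i s * p s i) (Set.Ioc 0 τ) :=
      contOn_mul_integrable (hFc τ hτ i) (hpiint τ hτ i)
    have hlin : (∫ s in Set.Ioc 0 τ, lam i * (2 * (x s i - xs i) * p s i))
        = (2 * lam i * (x 0 i - xs i)) * (∫ s in Set.Ioc 0 τ, p s i)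
          + (2 * lam i) * ∫ s in Set.Ioc 0 τ, F i s * p s i := by
      have hcong : ∀ s ∈ Set.Ioc 0 τ, lam i * (2 * (x s i - xs i) * p s i)
          = (2 * lam i * (x 0 i - xs i)) * p s i + (2 * lam i) * (F i s * p s i) := by
        intro s hs
        rw [hcomp s hs.1.le i]
        ring
      rw [setIntegral_congr_fun measurableSet_Ioc hcong]
      rw [MeasureTheory.integral_add (((hpiint τ hτ i).const_mul _)) (hFint.const_mul _)]
      rw [MeasureTheory.integral_const_mul, MeasureTheory.integral_const_mul]
    rw [hlin]
    have hFτ : (∫ s in Set.Ioc 0 τ, p s i) = F i τ := rfl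
    rw [hFτ]
    have hYY : (∫ s in Set.Ioc 0 τ, (∫ r in Set.Ioc 0 s, p r i) * p s i)
        = ∫ s in Set.Ioc 0 τ, F i s * p s i := rfl
    rw [hYY, hFτ] at hsq
    have h2 : (2 * lam i) * (∫ s in Set.Ioc 0 τ, F i s * p s i) = lam i * (F i τ)^2 := by
      have h3 : (∫ s in Set.Ioc 0 τ, F i s * p s i) = (F i τ)^2 / 2 := by linarith
      rw [h3]; ring
    rw [h2, hc]
    ring
  -- Pointwise key inequality
  have hsup : (⨆ i, hSh.eigenvalues i) = -(2*μ) := by rw [hμ]; ring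
  have hkey : ∀ s : ℝ, 0 ≤ s → g s ≤ (-(2*μ)) * V s := by
    intro s hs
    set z : Fin n → ℝ := fun i => x s i - xs i with hz
    set v : Fin n → ℝ := A *ᵥ x s + u with hv
    set M : Matrix (Fin n) (Fin n) ℝ := Aᵀ * Matrix.diagonal lam + Matrix.diagonal lam * A with hM
    have hzi : ∀ i, z i = x s i - xs i := fun i => rfl
    have hgz : g s = ∑ i, lam i * (2 * (z i * p s i)) := by
      rw [hg]
      apply Finset.sum_congr rfl
      intro i _
      rw [hzi i]; ring
    have hVz : V s = ∑ i, lam i * (z i)^2 := by rw [hV]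
    -- step 1 : projection inequality
    have hzp : ∀ i, z i * p s i ≤ z i * v i := by
      intro i
      have hdx := hxX s hs i
      have hdxs := hxsX i
      have hdi := hd i
      have hpsi : p s i = projX n d (x s) v i := rfl
      rw [hpsi]
      unfold projX
      by_cases h0 : d i * x s i = 0
      · rw [if_pos h0]
        rcases le_or_gt 0 (v i) with hvi | hvi
        · rw [max_eq_left hvi]
        · rw [max_eq_right hvi.le]
          have hx0 : x s i = 0 := by
            rcases mul_eq_zero.mp h0 with h | h
            · exact absurd h hdi.ne'
            · exact h
          have hxs0 : 0 ≤ xs i := aux_pos_cancel hdxs.1 hdi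
          have hzneg : z i ≤ 0 := by
            rw [hzi i, hx0]
            linarith
          rw [mul_zero]
          exact aux_mul_nonneg_of_nonpos_nonpos hzneg hvi.le
      · rw [if_neg h0]
        by_cases h1 : d i * x s i = 1
        · rw [if_pos h1]
          rcases le_or_gt (v i) 0 with hvi | hvi
          · rw [min_eq_left hvi]
          · rw [min_eq_right hvi.le]
            have hzpos : 0 ≤ z i := by
              rw [hzi i]
              have h2 : d i * xs i ≤ d i * x s i := by rw [h1]; exact hdxs.2
              exact sub_nonneg.mpr (le_of_mul_le_mul_left h2 hdi)
            rw [mul_zero]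
            exact mul_nonneg hzpos hvi.le
        · rw [if_neg h1]
    have step1 : g s ≤ ∑ i, lam i * (2 * (z i * v i)) := by
      rw [hgz]
      apply Finset.sum_le_sum
      intro i _
      exact aux_mono (hlam i).le (hzp i)
    -- step 2 : decompose v
    have hxz : x s = fun i => z i + xs i := by
      funext i
      rw [hzi i]; ring
    have hAv : ∀ i, v i = (A *ᵥ z) i + ((A *ᵥ xs) i + u i) := by
      intro i
      rw [hv, hxz]
      have : A *ᵥ (fun i => z i + xs i) = A *ᵥ z + A *ᵥ xs := Matrix.mulVec_add A z xs
      rw [this]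
      simp [Pi.add_apply]
      ring
    have hsplit2 : ∑ i, lam i * (2 * (z i * v i))
        = (∑ i, lam i * (2 * (z i * (A *ᵥ z) i)))
          + ∑ i, lam i * (2 * (z i * ((A *ᵥ xs) i + u i))) := by
      rw [← Finset.sum_add_distrib]
      apply Finset.sum_congr rfl
      intro i _
      rw [hAv i]
      ring
    -- step 3 : equilibrium term is nonpositive
    have step3 : ∀ i, lam i * (2 * (z i * ((A *ᵥ xs) i + u i))) ≤ 0 := by
      intro i
      have hdi := hd i
      have hdxs := hxsX i
      have hdx := hxX s hs i
      have hqs : d i * xs i = sat ((W *ᵥ xs) i + u i) := by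
        have h1 := congrFun hxs i
        simp only [Pi.add_apply, Pi.neg_apply, Pi.zero_apply] at h1
        rw [Matrix.mulVec_diagonal] at h1
        linarith
      have hwq : (A *ᵥ xs) i + u i = ((W *ᵥ xs) i + u i) - sat ((W *ᵥ xs) i + u i) := by
        rw [hA, Matrix.sub_mulVec]
        simp only [Pi.sub_apply]
        rw [Matrix.mulVec_diagonal, hqs]
        ring
      set q : ℝ := (W *ᵥ xs) i + u i with hq
      rw [hwq]
      unfold sat
      unfold sat at hqs
      rcases lt_or_ge q 0 with hq0 | hq0
      · have hsatq : max 0 (min q 1) = 0 := by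
          rw [min_eq_left (by linarith : q ≤ 1)]
          exact max_eq_left hq0.le
        rw [hsatq] at hqs ⊢
        have hxs0 : xs i = 0 := by
          rcases mul_eq_zero.mp hqs with h | h
          · exact absurd h hdi.ne'
          · exact h
        have hxnn : 0 ≤ x s i := aux_pos_cancel hdx.1 hdi
        have hzpos : 0 ≤ z i := by rw [hzi i, hxs0]; linarith
        exact aux_nonpos (hlam i).le (mul_nonpos_iff.mpr (Or.inl ⟨hzpos, by linarith⟩))
      · rcases le_or_gt q 1 with hq1 | hq1
        · have hsatq : max 0 (min q 1) = q := by
            rw [min_eq_left hq1]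
            exact max_eq_right hq0
          rw [hsatq]
          simp
        · have hsatq : max 0 (min q 1) = 1 := by
            rw [min_eq_right hq1.le]
            exact max_eq_right zero_le_one
          rw [hsatq] at hqs ⊢
          have hzneg : z i ≤ 0 := by
            rw [hzi i]
            have h2 : d i * x s i ≤ d i * xs i := by rw [hqs]; exact hdx.2
            exact sub_nonpos.mpr (le_of_mul_le_mul_left h2 hdi)
          exact aux_nonpos (hlam i).le (mul_nonpos_iff.mpr (Or.inr ⟨hzneg, by linarith⟩))
    have step3' : ∑ i, lam i * (2 * (z i * ((A *ᵥ xs) i + u i))) ≤ 0 :=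
      Finset.sum_nonpos (fun i _ => step3 i)
    -- step 4 : quadratic form identity
    have hMz : z ⬝ᵥ (M *ᵥ z) = ∑ i, lam i * (2 * (z i * (A *ᵥ z) i)) := by
      rw [hM, Matrix.add_mulVec, dotProduct_add]
      rw [← Matrix.mulVec_mulVec, ← Matrix.mulVec_mulVec]
      rw [Matrix.dotProduct_mulVec z Aᵀ, Matrix.vecMul_transpose]
      simp only [dotProduct, Matrix.mulVec_diagonal]
      rw [← Finset.sum_add_distrib]
      apply Finset.sum_congr rfl
      intro i _
      ring
    -- step 5 : relate to S
    set y : Fin n → ℝ := fun i => Real.sqrt (lam i) * z i with hy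
    have hsqrt_ne : ∀ i, Real.sqrt (lam i) ≠ 0 := by
      intro i
      exact (Real.sqrt_pos.mpr (hlam i)).ne'
    have hRy : (Matrix.diagonal fun i => (Real.sqrt (lam i))⁻¹) *ᵥ y = z := by
      funext i
      rw [Matrix.mulVec_diagonal]
      show (Real.sqrt (lam i))⁻¹ * (Real.sqrt (lam i) * z i) = z i
      rw [← mul_assoc, inv_mul_cancel₀ (hsqrt_ne i), one_mul]
    have hSy : y ⬝ᵥ (S *ᵥ y) = z ⬝ᵥ (M *ᵥ z) := by
      rw [hS, ← Matrix.mulVec_mulVec, ← Matrix.mulVec_mulVec, hRy]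
      simp only [dotProduct, Matrix.mulVec_diagonal]
      apply Finset.sum_congr rfl
      intro i _
      show Real.sqrt (lam i) * z i * ((Real.sqrt (lam i))⁻¹ * (M *ᵥ z) i) = z i * (M *ᵥ z) i
      rw [show Real.sqrt (lam i) * z i * ((Real.sqrt (lam i))⁻¹ * (M *ᵥ z) i)
          = (Real.sqrt (lam i) * (Real.sqrt (lam i))⁻¹) * (z i * (M *ᵥ z) i) by ring,
        mul_inv_cancel₀ (hsqrt_ne i), one_mul]
    have hyy : y ⬝ᵥ y = V s := by
      rw [hVz]
      simp only [dotProduct, hy]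
      apply Finset.sum_congr rfl
      intro i _
      show Real.sqrt (lam i) * z i * (Real.sqrt (lam i) * z i) = lam i * z i ^ 2
      rw [show Real.sqrt (lam i) * z i * (Real.sqrt (lam i) * z i)
          = (Real.sqrt (lam i) * Real.sqrt (lam i)) * z i ^ 2 by ring,
        Real.mul_self_sqrt (hlam i).le]
    have hray := rayleigh_le S hSh y
    rw [hyy, hsup, hSy, hMz] at hray
    calc g s ≤ ∑ i, lam i * (2 * (z i * v i)) := step1
      _ ≤ ∑ i, lam i * (2 * (z i * (A *ᵥ z) i)) := by rw [hsplit2]; linarith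
      _ ≤ (-(2*μ)) * V s := hray
  -- Stage 2 : weighted integral identity and sign
  have hVcont : ContinuousOn V (Set.Icc 0 t) := by
    rw [hV]
    apply continuousOn_finset_sum
    intro i _
    exact continuousOn_const.mul (((hxcont t ht i).sub continuousOn_const).pow 2)
  have hec : Continuous (fun s : ℝ => 2*μ * Real.exp (2*μ*s)) :=
    continuous_const.mul (Real.continuous_exp.comp (continuous_const.mul continuous_id))
  have hexp : IntegrableOn (fun s => 2*μ * Real.exp (2*μ*s)) (Set.Ioc 0 t) :=
    hec.integrableOn_Ioc
  have hexpg : IntegrableOn (fun r => Real.exp (2*μ*r) * g r) (Set.Ioc 0 t) :=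
    contOn_mul_integrable ((Real.continuous_exp.comp (continuous_const.mul continuous_id)).continuousOn)
      (hgint t ht)
  have h1int : IntegrableOn (fun s => (2*μ * Real.exp (2*μ*s)) * V s) (Set.Ioc 0 t) := by
    apply IntegrableOn.mono_set _ Set.Ioc_subset_Icc_self
    exact (hec.continuousOn.mul hVcont).integrableOn_compact isCompact_Icc
  have h2int : IntegrableOn (fun s => (2*μ * Real.exp (2*μ*s)) * V 0) (Set.Ioc 0 t) :=
    hexp.mul_const _
  have key := fubini_triangle (hgint t ht) hexp
  have hLc : ∀ r ∈ Set.Ioc 0 t, g r * (∫ s in Set.Ioc r t, 2*μ * Real.exp (2*μ*s))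
      = g r * Real.exp (2*μ*t) - Real.exp (2*μ*r) * g r := by
    intro r hr
    rw [integral_exp_mul_Ioc (2*μ) hr.2]
    ring
  rw [setIntegral_congr_fun measurableSet_Ioc hLc] at key
  rw [MeasureTheory.integral_sub ((hgint t ht).mul_const _) hexpg, MeasureTheory.integral_mul_const] at key
  have hRc : ∀ s ∈ Set.Ioc 0 t, (∫ r in Set.Ioo 0 s, g r) * (2*μ * Real.exp (2*μ*s))
      = (2*μ * Real.exp (2*μ*s)) * V s - (2*μ * Real.exp (2*μ*s)) * V 0 := by
    intro s hs
    rw [← integral_Ioc_eq_integral_Ioo]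
    have hst := stage1 s hs.1.le
    rw [show (∫ r in Set.Ioc 0 s, g r) = V s - V 0 by linarith [hst]]
    ring
  rw [setIntegral_congr_fun measurableSet_Ioc hRc] at key
  rw [MeasureTheory.integral_sub h1int h2int, MeasureTheory.integral_mul_const,
    integral_exp_mul_Ioc (2*μ) ht, mul_zero, Real.exp_zero] at key
  have hnonpos : (∫ s in Set.Ioc 0 t,
      (Real.exp (2*μ*s) * g s + (2*μ * Real.exp (2*μ*s)) * V s)) ≤ 0 := by
    apply MeasureTheory.setIntegral_nonpos measurableSet_Ioc
    intro s hs
    have hk := hkey s hs.1.le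
    calc Real.exp (2*μ*s) * g s + (2*μ * Real.exp (2*μ*s)) * V s
        = Real.exp (2*μ*s) * (g s + 2*μ * V s) := by ring
      _ ≤ 0 := mul_nonpos_iff.mpr (Or.inl ⟨(Real.exp_pos _).le, by linarith [hk]⟩)
  rw [MeasureTheory.integral_add hexpg h1int] at hnonpos
  have hstt := stage1 t ht
  have key2 : Real.exp (2*μ*t) * V t - V 0
      = (∫ r in Set.Ioc 0 t, Real.exp (2*μ*r) * g r)
        + ∫ s in Set.Ioc 0 t, (2*μ * Real.exp (2*μ*s)) * V s := by
    have hGt : (∫ s in Set.Ioc 0 t, g s) = V t - V 0 := by linarith [hstt]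
    rw [hGt] at key
    linear_combination key
  have hVt : Real.exp (2*μ*t) * V t ≤ V 0 := by linarith [hnonpos, key2]
  -- Final conversion to square roots
  have hVt0 : 0 ≤ V t := by
    rw [hV]
    exact Finset.sum_nonneg fun i _ => mul_nonneg (hlam i).le (sq_nonneg _)
  have hV00 : 0 ≤ V 0 := by
    rw [hV]
    exact Finset.sum_nonneg fun i _ => mul_nonneg (hlam i).le (sq_nonneg _)
  have hEpos : (0:ℝ) < Real.exp (2*μ*t) := Real.exp_pos _
  have hEsq : Real.exp (-μ*t)^2 = (Real.exp (2*μ*t))⁻¹ := by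
    rw [← Real.exp_neg]
    rw [show Real.exp (-μ*t)^2 = Real.exp (-μ*t) * Real.exp (-μ*t) by ring, ← Real.exp_add]
    congr 1
    ring
  have hVle : V t ≤ Real.exp (-μ*t)^2 * V 0 := by
    rw [hEsq, inv_mul_eq_div, le_div_iff₀ hEpos]
    calc V t * Real.exp (2*μ*t) = Real.exp (2*μ*t) * V t := by ring
      _ ≤ V 0 := hVt
  show Real.sqrt (V t) ≤ Real.exp (-μ*t) * Real.sqrt (V 0)
  calc Real.sqrt (V t) ≤ Real.sqrt (Real.exp (-μ*t)^2 * V 0) := Real.sqrt_le_sqrt hVle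
    _ = Real.exp (-μ*t) * Real.sqrt (V 0) := by
        rw [Real.sqrt_mul (sq_nonneg _), Real.sqrt_sq (Real.exp_pos _).le]
end

section
/- Let x : [0,∞) → ℝ^n be absolutely continuous with x(0) ∈ X and suppose that for almost every s ≥ 0 the derivative satisfies ẋ(s) ∈ -D x(s) + H(A x(s) + u), i.e., there exists σ(s) with σ_i(s) ∈ h((A x(s) + u)_i) for each i and ẋ(s) = -D x(s) + σ(s). Then x(s) ∈ X for all s ≥ 0. -/
open Matrix MeasureTheory intervalIntegral
open scoped Classical

/-- Convexified hard-selector map `h`. -/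
noncomputable def hsel (z : ℝ) : Set ℝ :=
  if z < 0 then {0} else if z = 0 then Set.Icc 0 1 else {1}

lemma hsel_subset (z : ℝ) : hsel z ⊆ Set.Icc (0:ℝ) 1 := by
  intro w hw
  unfold hsel at hw
  split_ifs at hw
  · rw [Set.mem_singleton_iff] at hw; subst hw; exact ⟨le_refl 0, zero_le_one⟩
  · exact hw
  · rw [Set.mem_singleton_iff] at hw; subst hw; exact ⟨zero_le_one, le_refl 1⟩

/-- One-sided invariance: if `y(t) = y(0) + ∫₀ᵗ f`, `f(s) ≤ -d y(s) + 1` a.e. on `(0,T]`,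
and `d y(0) ≤ 1`, then `d y(T) ≤ 1`. -/
lemma inv_upper (d : ℝ) (hd : 0 < d) (T : ℝ) (hT : 0 ≤ T)
    (y f : ℝ → ℝ)
    (hfi : IntervalIntegrable f volume 0 T)
    (hfae : ∀ᵐ s : ℝ ∂volume, s ∈ Set.Ioc 0 T → f s ≤ -d * y s + 1)
    (hsol : ∀ t ∈ Set.Icc (0:ℝ) T, y t = y 0 + ∫ s in (0:ℝ)..t, f s)
    (h0 : d * y 0 ≤ 1) :
    d * y T ≤ 1 := by
  have hy : ContinuousOn y (Set.Icc 0 T) := by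
    have h1 : ContinuousOn (fun t => y 0 + ∫ s in (0:ℝ)..t, f s) (Set.Icc 0 T) := by
      have h2 := intervalIntegral.continuousOn_primitive_interval' hfi
        (Set.left_mem_uIcc (a := (0:ℝ)) (b := T))
      rw [Set.uIcc_of_le hT] at h2
      exact continuousOn_const.add h2
    exact h1.congr hsol
  by_contra hcon
  push_neg at hcon
  have hyT : 1 / d < y T := by
    rw [div_lt_iff₀ hd]; linarith [mul_comm d (y T)]
  set S : Set ℝ := Set.Icc 0 T ∩ y ⁻¹' Set.Iic (1 / d) with hS
  have hScl : IsClosed S := hy.preimage_isClosed_of_isClosed isClosed_Icc isClosed_Iic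
  have h0S : (0:ℝ) ∈ S := by
    refine ⟨Set.left_mem_Icc.2 hT, ?_⟩
    simp only [Set.mem_preimage, Set.mem_Iic]
    rw [le_div_iff₀ hd]; linarith [mul_comm (y 0) d]
  have hSbdd : BddAbove S := BddAbove.mono Set.inter_subset_left (bddAbove_Icc)
  set c := sSup S with hc
  have hcS : c ∈ S := hScl.csSup_mem ⟨0, h0S⟩ hSbdd
  have hc0 : 0 ≤ c := hcS.1.1
  have hcT : c ≤ T := hcS.1.2
  have hyc : y c ≤ 1 / d := hcS.2
  have hcltT : c < T := by
    rcases lt_or_eq_of_le hcT with h | h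
    · exact h
    · exfalso; rw [h] at hyc; linarith
  have hgt : ∀ s ∈ Set.Ioc c T, 1 / d < y s := by
    intro s hs
    by_contra hle
    push_neg at hle
    have hsS : s ∈ S := ⟨⟨le_trans hc0 hs.1.le, hs.2⟩, hle⟩
    exact absurd (le_csSup hSbdd hsS) (not_le.2 hs.1)
  have hint0c : IntervalIntegrable f volume 0 c :=
    hfi.mono_set (by rw [Set.uIcc_of_le hc0, Set.uIcc_of_le hT]; exact Set.Icc_subset_Icc_right hcT)
  have hsubcT : Set.uIcc c T ⊆ Set.uIcc 0 T := by
    rw [Set.uIcc_of_le hcltT.le, Set.uIcc_of_le hT]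
    exact Set.Icc_subset_Icc_left hc0
  have hintcT : IntervalIntegrable f volume c T := hfi.mono_set hsubcT
  have hneg : (∫ s in c..T, f s) ≤ 0 := by
    have h1 : (0:ℝ) ≤ ∫ s in c..T, (-f s) := by
      apply intervalIntegral.integral_nonneg_of_ae_restrict hcltT.le
      rw [← MeasureTheory.restrict_Ioc_eq_restrict_Icc]
      have h2 := MeasureTheory.ae_restrict_of_ae (s := Set.Ioc c T) hfae
      have h3 : ∀ᵐ s ∂(volume.restrict (Set.Ioc c T)), s ∈ Set.Ioc c T :=
        ae_restrict_mem measurableSet_Ioc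
      filter_upwards [h2, h3] with s hs hsm
      have h4 : 1 / d < y s := hgt s hsm
      have h5 : f s ≤ -d * y s + 1 := hs ⟨lt_of_le_of_lt hc0 hsm.1, hsm.2⟩
      have h6 : 1 < d * y s := by rw [← div_lt_iff₀' hd]; exact h4
      simp only [Pi.zero_apply, Pi.neg_apply]
      linarith
    have h7 : (∫ s in c..T, (-f s)) = -∫ s in c..T, f s := intervalIntegral.integral_neg
    linarith [h7 ▸ h1]
  have hyTc : y T = y c + ∫ s in c..T, f s := by
    have e1 := hsol T (Set.right_mem_Icc.2 hT)
    have e2 := hsol c ⟨hc0, hcT⟩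
    have e3 : ((∫ s in (0:ℝ)..T, f s) - ∫ s in (0:ℝ)..c, f s) = ∫ s in c..T, f s :=
      intervalIntegral.integral_interval_sub_left hfi hint0c
    rw [e1, e2]; linarith
  have hle : y T ≤ 1 / d := by linarith
  nlinarith [mul_le_mul_of_nonneg_left hle hd.le, mul_one_div_cancel hd.ne']

/-- **Strong forward invariance of X for the hard-selector inclusion.**
Any absolutely continuous trajectory (encoded in integral form via a selection σ)
starting in `X = {x : dᵢxᵢ ∈ [0,1]}` and satisfying
`ẋ(s) ∈ -Dx(s) + H(Ax(s) + u)` for a.e. `s ≥ 0` remains in `X` for all `s ≥ 0`. -/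
theorem HSS_forward_invariance
    (n : ℕ) (hn : 1 ≤ n)
    (d : Fin n → ℝ) (hd : ∀ i, 0 < d i)
    (W : Matrix (Fin n) (Fin n) ℝ) (u : Fin n → ℝ)
    (A : Matrix (Fin n) (Fin n) ℝ) (hA : A = W - Matrix.diagonal d)
    (x σ : ℝ → Fin n → ℝ)
    (hx0 : ∀ i, d i * x 0 i ∈ Set.Icc (0:ℝ) 1)
    (hσ : ∀ᵐ s : ℝ ∂volume, 0 ≤ s → ∀ i, σ s i ∈ hsel ((A *ᵥ x s + u) i))
    (hint : ∀ t : ℝ, 0 ≤ t →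
      IntervalIntegrable (fun s => -(Matrix.diagonal d *ᵥ x s) + σ s) volume 0 t)
    (hsol : ∀ t : ℝ, 0 ≤ t →
      x t = x 0 + ∫ s in (0:ℝ)..t, (-(Matrix.diagonal d *ᵥ x s) + σ s)) :
    ∀ s : ℝ, 0 ≤ s → ∀ i, d i * x s i ∈ Set.Icc (0:ℝ) 1 := by
  intro T hT i
  set F : ℝ → Fin n → ℝ := fun s => -(Matrix.diagonal d *ᵥ x s) + σ s with hF
  have hFi : ∀ s, F s i = -(d i * x s i) + σ s i := by
    intro s
    simp [hF, Matrix.mulVec_diagonal]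
  -- componentwise integrability
  have hfi : IntervalIntegrable (fun s => -(d i * x s i) + σ s i) volume 0 T := by
    have h1 := hint T hT
    constructor
    · have := (ContinuousLinearMap.proj (R := ℝ) (φ := fun _ : Fin n => ℝ) i).integrable_comp h1.1
      simpa [hFi, IntegrableOn] using this
    · have := (ContinuousLinearMap.proj (R := ℝ) (φ := fun _ : Fin n => ℝ) i).integrable_comp h1.2
      simpa [hFi, IntegrableOn] using this
  -- componentwise solution formula
  have hsol_i : ∀ t ∈ Set.Icc (0:ℝ) T, x t i = x 0 i + ∫ s in (0:ℝ)..t, (-(d i * x s i) + σ s i) := by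
    intro t ht
    have h1 := hsol t ht.1
    have h2 : IntervalIntegrable F volume 0 t := hint t ht.1
    have h3 := (ContinuousLinearMap.proj (R := ℝ) (φ := fun _ : Fin n => ℝ) i).intervalIntegral_comp_comm h2
    have h4 : x t i = x 0 i + (∫ s in (0:ℝ)..t, F s) i := by rw [h1]; simp
    have h5 : (∫ s in (0:ℝ)..t, F s) i
        = ∫ s in (0:ℝ)..t, (ContinuousLinearMap.proj (R := ℝ) (φ := fun _ : Fin n => ℝ) i) (F s) :=
      h3.symm
    rw [h4, h5]
    congr 1
    refine intervalIntegral.integral_congr fun s _ => ?_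
    simp only [ContinuousLinearMap.proj_apply]
    exact hFi s
  -- a.e. bounds on σ
  have hσb : ∀ᵐ s : ℝ ∂volume, s ∈ Set.Ioc 0 T → σ s i ∈ Set.Icc (0:ℝ) 1 := by
    filter_upwards [hσ] with s hs hsm
    exact hsel_subset _ (hs hsm.1.le i)
  -- upper bound
  have hup : d i * x T i ≤ 1 := by
    apply inv_upper (d i) (hd i) T hT (fun t => x t i) _ hfi _ hsol_i (hx0 i).2
    filter_upwards [hσb] with s hs hsm
    have := (hs hsm).2
    linarith
  -- lower bound via the reflected trajectory
  have hlo : 0 ≤ d i * x T i := by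
    have h2 : d i * (1 / d i - x T i) ≤ 1 := by
      apply inv_upper (d i) (hd i) T hT (fun t => 1 / d i - x t i)
        (fun s => -(-(d i * x s i) + σ s i)) hfi.neg _ _ _
      · filter_upwards [hσb] with s hs hsm
        have := (hs hsm).1
        have hdi : d i * (1 / d i) = 1 := mul_one_div_cancel (hd i).ne'
        nlinarith
      · intro t ht
        have h3 := hsol_i t ht
        have h4 : (∫ s in (0:ℝ)..t, -(-(d i * x s i) + σ s i))
            = -∫ s in (0:ℝ)..t, (-(d i * x s i) + σ s i) := intervalIntegral.integral_neg
        rw [h4]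
        linarith
      · have hdi : d i * (1 / d i) = 1 := mul_one_div_cancel (hd i).ne'
        have := (hx0 i).1
        nlinarith
    have hdi : d i * (1 / d i) = 1 := mul_one_div_cancel (hd i).ne'
    nlinarith
  exact ⟨hlo, hup⟩
end

section
/- A point x ∈ X satisfies 0 ∈ -Dx + H(Ax + u) (i.e., there exists σ ∈ ℝ^n with σ_i ∈ h((Ax+u)_i) for all i and Dx = σ) if and only if -Dx + [Wx + u]_0^1 = 0. Hence the hard-selector system and the linear-threshold network have the same equilibria; moreover, if A is Lyapunov diagonally stable this equilibrium is unique. -/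
open Matrix
open scoped Classical

private lemma sat_mem (z : ℝ) : sat z ∈ Set.Icc (0:ℝ) 1 :=
  ⟨le_max_left _ _, max_le (by norm_num) (min_le_right _ _)⟩

private lemma sat_sub_sq (a b : ℝ) : (sat a - sat b)^2 ≤ (a - b)^2 := by
  unfold sat
  rcases max_cases 0 (min a 1) with ⟨h1,h2⟩|⟨h1,h2⟩ <;>
  rcases max_cases 0 (min b 1) with ⟨h3,h4⟩|⟨h3,h4⟩ <;>
  rcases min_cases a 1 with ⟨h5,h6⟩|⟨h5,h6⟩ <;>
  rcases min_cases b 1 with ⟨h7,h8⟩|⟨h7,h8⟩ <;>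
  rw [h1, h3] <;> nlinarith [h5, h6, h7, h8]

private lemma hsel_iff (γ c y : ℝ) (hγ : 0 < γ) (hy : y ∈ Set.Icc (0:ℝ) 1) :
    y ∈ hsel c ↔ y = sat (y + γ * c) := by
  obtain ⟨hy0, hy1⟩ := hy
  unfold hsel sat
  rcases lt_trichotomy c 0 with hc | hc | hc
  · simp only [if_pos hc, Set.mem_singleton_iff]
    have hgc : γ * c < 0 := mul_neg_of_pos_of_neg hγ hc
    constructor
    · rintro rfl
      rcases min_cases (0 + γ * c) 1 with ⟨h5,h6⟩|⟨h5,h6⟩ <;> rw [h5] <;>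
        [skip; linarith] <;> rw [max_eq_left (by linarith)]
    · intro h
      rcases max_cases 0 (min (y + γ*c) 1) with ⟨h1,h2⟩|⟨h1,h2⟩ <;>
      rcases min_cases (y + γ*c) 1 with ⟨h5,h6⟩|⟨h5,h6⟩ <;>
        rw [h1] at h <;> nlinarith
  · subst hc
    simp only [lt_irrefl, if_neg (lt_irrefl (0:ℝ)), if_pos rfl]
    rw [mul_zero, add_zero]
    constructor
    · intro h
      rw [min_eq_left hy1, max_eq_right hy0]
    · intro _; exact ⟨hy0, hy1⟩
  · simp only [if_neg (not_lt.mpr hc.le), if_neg hc.ne', Set.mem_singleton_iff]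
    have hgc : 0 < γ * c := mul_pos hγ hc
    constructor
    · rintro rfl
      rw [min_eq_right (by linarith), max_eq_right (by norm_num)]
    · intro h
      rcases max_cases 0 (min (y + γ*c) 1) with ⟨h1,h2⟩|⟨h1,h2⟩ <;>
      rcases min_cases (y + γ*c) 1 with ⟨h5,h6⟩|⟨h5,h6⟩ <;>
        rw [h1] at h <;> nlinarith

private lemma dot_identity' (n : ℕ) (lam : Fin n → ℝ) (A : Matrix (Fin n) (Fin n) ℝ) (z : Fin n → ℝ) :
    z ⬝ᵥ ((Aᵀ * Matrix.diagonal lam + Matrix.diagonal lam * A) *ᵥ z)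
      = 2 * ∑ i, lam i * z i * (A *ᵥ z) i := by
  simp only [Matrix.add_mulVec, dotProduct_add, Matrix.mulVec, Matrix.mul_apply,
    dotProduct, Matrix.transpose_apply, Matrix.diagonal_apply, Matrix.add_apply,
    Finset.sum_mul, Finset.mul_sum, ite_mul, mul_ite, zero_mul, mul_zero, add_mul, mul_add]
  simp only [Finset.sum_ite_eq, Finset.sum_ite_eq', Finset.mem_univ, if_pos, if_true]
  simp only [Finset.sum_add_distrib, Finset.mul_sum]
  rw [Finset.sum_comm (f := fun x x_1 => z x * (A x_1 x * lam x_1 * z x_1))]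
  rw [← Finset.sum_add_distrib]
  congr 1; funext i
  rw [← Finset.sum_add_distrib]
  congr 1; funext j
  ring

private lemma exists_mu (n : ℕ) (hn : 1 ≤ n) (lam : Fin n → ℝ) (A : Matrix (Fin n) (Fin n) ℝ)
    (hneg : ∀ e : Fin n → ℝ, e ≠ 0 → ∑ i, lam i * e i * (A *ᵥ e) i < 0) :
    ∃ μ₀ > 0, ∀ e : Fin n → ℝ, μ₀ * ∑ i, e i ^ 2 ≤ -∑ i, lam i * e i * (A *ᵥ e) i := by
  set E := EuclideanSpace ℝ (Fin n) with hE
  let g : E → ℝ := fun e => -∑ i, lam i * e i * (A *ᵥ (e : Fin n → ℝ)) i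
  have hgc : Continuous g := by
    apply Continuous.neg
    apply continuous_finset_sum
    intro i _
    refine Continuous.mul (Continuous.mul continuous_const ?_) ?_
    · exact (EuclideanSpace.proj i).continuous
    · show Continuous fun e : E => ∑ j, A i j * e j
      apply continuous_finset_sum
      intro j _
      exact Continuous.mul continuous_const (EuclideanSpace.proj j).continuous
  have hnormsq : ∀ e : E, ‖e‖ ^ 2 = ∑ i, e i ^ 2 := by
    intro e
    rw [EuclideanSpace.norm_eq, Real.sq_sqrt (Finset.sum_nonneg fun i _ => sq_nonneg _)]
    simp [sq_abs]
  have hsph : IsCompact (Metric.sphere (0:E) 1) := isCompact_sphere 0 1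
  have hne : (Metric.sphere (0:E) 1).Nonempty := by
    refine ⟨EuclideanSpace.single ⟨0, hn⟩ (1:ℝ), ?_⟩
    rw [Metric.mem_sphere, dist_zero_right, EuclideanSpace.norm_single]
    norm_num
  obtain ⟨e₀, he₀s, hmin⟩ := hsph.exists_isMinOn hne hgc.continuousOn
  have he₀norm : ‖e₀‖ = 1 := by simpa using he₀s
  have he₀ne : (e₀ : Fin n → ℝ) ≠ 0 := by
    intro h0
    rw [show e₀ = (0:E) from WithLp.ofLp_injective 2 h0] at he₀norm
    simp at he₀norm
  have hμ₀pos : 0 < g e₀ := by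
    have := hneg e₀ he₀ne
    simp only [g]
    linarith
  refine ⟨g e₀, hμ₀pos, ?_⟩
  suffices h : ∀ e : E, g e₀ * ∑ i, e i ^ 2 ≤ g e from fun e => h (WithLp.toLp 2 e)
  intro e
  by_cases he : e = (0:E)
  · subst he
    have : ∀ i, (0:E) i = (0:ℝ) := fun _ => rfl
    simp only [g, this]
    simp
  · have hen : (0:ℝ) < ‖e‖ := by rwa [norm_pos_iff]
    set c : ℝ := ‖e‖⁻¹ with hc
    have hcpos : 0 < c := inv_pos.mpr hen
    have hsm : c • e ∈ Metric.sphere (0:E) 1 := by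
      have h1 : ‖c • e‖ = 1 := by
        rw [norm_smul, Real.norm_eq_abs, abs_of_pos hcpos, hc, inv_mul_cancel₀ hen.ne']
      simpa using h1
    have hmin' : g e₀ ≤ g (c • e) := hmin hsm
    have hhom : g (c • e) = c ^ 2 * g e := by
      have hkey : ∑ i, lam i * (c * e i) * (c * (A *ᵥ (e : Fin n → ℝ)) i)
          = c ^ 2 * ∑ i, lam i * e i * (A *ᵥ (e : Fin n → ℝ)) i := by
        rw [Finset.mul_sum]
        exact Finset.sum_congr rfl fun i _ => by ring
      have hsmul : ∀ i, (c • e) i = c * e i := fun _ => rfl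
      have hmv : (A *ᵥ ((c • e : E) : Fin n → ℝ)) = c • (A *ᵥ (e : Fin n → ℝ)) := by
        rw [show ((c • e : E) : Fin n → ℝ) = c • (e : Fin n → ℝ) from rfl, Matrix.mulVec_smul]
      simp only [g, hmv, hsmul, Pi.smul_apply, smul_eq_mul]
      rw [hkey]
      ring
    have hle : g e₀ ≤ c ^ 2 * g e := hhom ▸ hmin'
    have h2 : c ^ 2 = (‖e‖^2)⁻¹ := by rw [hc, inv_pow]
    rw [h2] at hle
    have hn2 : (0:ℝ) < ‖e‖^2 := by positivity
    rw [← hnormsq e]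
    calc g e₀ * ‖e‖^2 ≤ ((‖e‖^2)⁻¹ * g e) * ‖e‖^2 := by
          apply mul_le_mul_of_nonneg_right hle hn2.le
      _ = g e := by field_simp

set_option maxHeartbeats 2000000 in
/-- **HSS and LTN have the same equilibria.** A point `x ∈ X` satisfies
`0 ∈ -Dx + H(Ax + u)` iff `-Dx + [Wx + u]₀¹ = 0`; moreover, under Lyapunov
diagonal stability of `A` this equilibrium is unique. -/
theorem HSS_LTN_same_equilibria
    (n : ℕ) (hn : 1 ≤ n)
    (d : Fin n → ℝ) (hd : ∀ i, 0 < d i)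
    (W : Matrix (Fin n) (Fin n) ℝ) (u : Fin n → ℝ)
    (A : Matrix (Fin n) (Fin n) ℝ) (hA : A = W - Matrix.diagonal d) :
    (∀ x : Fin n → ℝ, (∀ i, d i * x i ∈ Set.Icc (0:ℝ) 1) →
      ((∃ σ : Fin n → ℝ, (∀ i, σ i ∈ hsel ((A *ᵥ x + u) i))
          ∧ Matrix.diagonal d *ᵥ x = σ)
        ↔ -(Matrix.diagonal d *ᵥ x) + (fun i => sat ((W *ᵥ x + u) i)) = 0))
    ∧ ((∃ lam : Fin n → ℝ, (∀ i, 0 < lam i) ∧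
          ∀ z : Fin n → ℝ, z ≠ 0 →
            z ⬝ᵥ ((Aᵀ * Matrix.diagonal lam + Matrix.diagonal lam * A) *ᵥ z) < 0) →
        ∃! x : Fin n → ℝ, (∀ i, d i * x i ∈ Set.Icc (0:ℝ) 1) ∧
          ∃ σ : Fin n → ℝ, (∀ i, σ i ∈ hsel ((A *ᵥ x + u) i))
            ∧ Matrix.diagonal d *ᵥ x = σ) := by
  constructor
  · -- Part 1
    intro x hx
    have hW : ∀ i, (W *ᵥ x + u) i = (d i * x i) + 1 * ((A *ᵥ x + u) i) := by
      intro i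
      subst hA
      simp only [Pi.add_apply, Matrix.sub_mulVec, Matrix.mulVec_diagonal, Pi.sub_apply]
      ring
    have hDx : ∀ i, (Matrix.diagonal d *ᵥ x) i = d i * x i := fun i =>
      Matrix.mulVec_diagonal d x i
    have key : ∀ i, (d i * x i ∈ hsel ((A *ᵥ x + u) i)) ↔
        -(Matrix.diagonal d *ᵥ x) i + sat ((W *ᵥ x + u) i) = 0 := by
      intro i
      rw [hW i, hDx i, hsel_iff 1 _ _ one_pos (hx i)]
      constructor <;> intro h <;> linarith
    constructor
    · rintro ⟨σ, hσ, rfl⟩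
      funext i
      have h1 : d i * x i ∈ hsel ((A *ᵥ x + u) i) := by rw [← hDx i]; exact hσ i
      simpa using (key i).mp h1
    · intro h
      refine ⟨Matrix.diagonal d *ᵥ x, fun i => ?_, rfl⟩
      rw [hDx i]
      exact (key i).mpr (by simpa using congrFun h i)
  · -- Part 2
    rintro ⟨lam, hlam, hLDS⟩
    have hneg : ∀ e : Fin n → ℝ, e ≠ 0 → ∑ i, lam i * e i * (A *ᵥ e) i < 0 := by
      intro e h0
      have := hLDS e h0
      rw [dot_identity'] at this
      linarith
    obtain ⟨μ₀, hμ₀, hmu⟩ := exists_mu n hn lam A hneg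
    set v : Fin n → ℝ := fun i => lam i * d i with hvdef
    have hv : ∀ i, 0 < v i := fun i => mul_pos (hlam i) (hd i)
    have i0 : Fin n := ⟨0, hn⟩
    set S := ∑ i, v i with hSdef
    have hS : 0 < S := Finset.sum_pos (fun i _ => hv i) ⟨i0, Finset.mem_univ _⟩
    have hvS : ∀ i, v i ≤ S :=
      fun i => Finset.single_le_sum (fun j _ => (hv j).le) (Finset.mem_univ i)
    have hQle : ∀ e : Fin n → ℝ, ∑ i, v i * e i ^ 2 ≤ S * ∑ i, e i ^ 2 := by
      intro e
      rw [Finset.mul_sum]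
      exact Finset.sum_le_sum fun i _ => mul_le_mul_of_nonneg_right (hvS i) (sq_nonneg _)
    set μ := μ₀ / S with hμdef
    have hμ : 0 < μ := div_pos hμ₀ hS
    have hcross : ∀ e : Fin n → ℝ,
        ∑ i, lam i * e i * (A *ᵥ e) i ≤ -μ * ∑ i, v i * e i ^ 2 := by
      intro e
      have h1 := hmu e
      have h2 := hQle e
      have h3 : μ * ∑ i, v i * e i ^ 2 ≤ μ₀ * ∑ i, e i ^ 2 := by
        calc μ * ∑ i, v i * e i ^ 2 ≤ μ * (S * ∑ i, e i ^ 2) :=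
              mul_le_mul_of_nonneg_left h2 hμ.le
          _ = μ₀ * ∑ i, e i ^ 2 := by
              rw [hμdef]; field_simp
      linarith
    set m := Finset.univ.inf' ⟨i0, Finset.mem_univ i0⟩ v with hmdef
    have hm : 0 < m := by
      rw [hmdef]; refine (Finset.lt_inf'_iff _).mpr ?_
      exact fun i _ => hv i
    have hmle : ∀ i, m ≤ v i := fun i => Finset.inf'_le _ (Finset.mem_univ i)
    have hsum_le : ∀ e : Fin n → ℝ, ∑ i, e i ^ 2 ≤ m⁻¹ * ∑ i, v i * e i ^ 2 := by
      intro e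
      rw [Finset.mul_sum]
      refine Finset.sum_le_sum fun i _ => ?_
      have h1 : 1 ≤ m⁻¹ * v i := by
        rw [inv_mul_eq_div, le_div_iff₀ hm]
        simpa using hmle i
      nlinarith [sq_nonneg (e i)]
    set C₁ := ∑ i, (lam i / d i) * (∑ j, (A i j) ^ 2) with hC₁def
    have hC₁ : 0 ≤ C₁ := Finset.sum_nonneg fun i _ =>
      mul_nonneg (div_nonneg (hlam i).le (hd i).le) (Finset.sum_nonneg fun j _ => sq_nonneg _)
    have hquad : ∀ e : Fin n → ℝ,
        ∑ i, (lam i / d i) * ((A *ᵥ e) i) ^ 2 ≤ C₁ * ∑ j, e j ^ 2 := by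
      intro e
      rw [hC₁def, Finset.sum_mul]
      refine Finset.sum_le_sum fun i _ => ?_
      have hcs : ((A *ᵥ e) i) ^ 2 ≤ (∑ j, (A i j) ^ 2) * (∑ j, e j ^ 2) := by
        have := Finset.sum_mul_sq_le_sq_mul_sq Finset.univ (fun j => A i j) e
        simpa [Matrix.mulVec, dotProduct] using this
      have hpos : 0 ≤ lam i / d i := div_nonneg (hlam i).le (hd i).le
      calc (lam i / d i) * ((A *ᵥ e) i) ^ 2
          ≤ (lam i / d i) * ((∑ j, (A i j) ^ 2) * (∑ j, e j ^ 2)) :=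
            mul_le_mul_of_nonneg_left hcs hpos
        _ = (lam i / d i) * (∑ j, (A i j) ^ 2) * (∑ j, e j ^ 2) := by ring
    set L := C₁ * m⁻¹ + μ ^ 2 + 1 with hLdef
    have hL : 0 < L := by positivity
    have hquadv : ∀ e : Fin n → ℝ,
        ∑ i, (lam i / d i) * ((A *ᵥ e) i) ^ 2 ≤ L * ∑ i, v i * e i ^ 2 := by
      intro e
      have h1 := hquad e
      have h2 := hsum_le e
      have hQ0 : 0 ≤ ∑ i, v i * e i ^ 2 :=
        Finset.sum_nonneg fun i _ => mul_nonneg (hv i).le (sq_nonneg _)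
      have h3 := mul_le_mul_of_nonneg_left h2 hC₁
      rw [hLdef]
      nlinarith [sq_nonneg μ]
    have hμL : μ ^ 2 / L < 1 := by
      rw [div_lt_one hL, hLdef]
      have : 0 ≤ C₁ * m⁻¹ := mul_nonneg hC₁ (inv_nonneg.mpr hm.le)
      linarith
    have hμL0 : 0 < μ ^ 2 / L := by positivity
    set γ := μ / L with hγdef
    have hγ : 0 < γ := div_pos hμ hL
    set k2 := 1 - μ ^ 2 / L with hk2def
    have hk2a : 0 < k2 := by rw [hk2def]; linarith
    have hk2b : k2 < 1 := by rw [hk2def]; linarith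
    set T : (Fin n → ℝ) → (Fin n → ℝ) :=
      fun x i => sat (d i * x i + γ * ((A *ᵥ x + u) i)) / d i with hTdef
    have hcontract : ∀ x x' : Fin n → ℝ,
        ∑ i, v i * (T x i - T x' i) ^ 2 ≤ k2 * ∑ i, v i * (x i - x' i) ^ 2 := by
      intro x x'
      set e : Fin n → ℝ := x - x' with hedef
      have hei : ∀ i, e i = x i - x' i := fun i => rfl
      have step1 : ∀ i, v i * (T x i - T x' i) ^ 2
          ≤ (lam i / d i) * (d i * e i + γ * (A *ᵥ e) i) ^ 2 := by
        intro i
        have hab : (d i * x i + γ * ((A *ᵥ x + u) i)) - (d i * x' i + γ * ((A *ᵥ x' + u) i))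
            = d i * e i + γ * (A *ᵥ e) i := by
          have hmv : (A *ᵥ e) i = (A *ᵥ x) i - (A *ᵥ x') i := by
            rw [hedef, Matrix.mulVec_sub]; rfl
          simp only [Pi.add_apply]
          rw [hmv, hei i]
          ring
        have hsat := sat_sub_sq (d i * x i + γ * ((A *ᵥ x + u) i))
          (d i * x' i + γ * ((A *ᵥ x' + u) i))
        rw [hab] at hsat
        have hd' : d i ≠ 0 := (hd i).ne'
        have heq : v i * (T x i - T x' i) ^ 2
            = (lam i / d i) * (sat (d i * x i + γ * ((A *ᵥ x + u) i))
                - sat (d i * x' i + γ * ((A *ᵥ x' + u) i))) ^ 2 := by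
          rw [hTdef, hvdef]
          field_simp
        rw [heq]
        exact mul_le_mul_of_nonneg_left hsat (div_nonneg (hlam i).le (hd i).le)
      have step2 : ∑ i, (lam i / d i) * (d i * e i + γ * (A *ᵥ e) i) ^ 2
          = ∑ i, v i * e i ^ 2 + 2 * γ * (∑ i, lam i * e i * (A *ᵥ e) i)
            + γ ^ 2 * ∑ i, (lam i / d i) * ((A *ᵥ e) i) ^ 2 := by
        rw [Finset.mul_sum, Finset.mul_sum, ← Finset.sum_add_distrib, ← Finset.sum_add_distrib]
        refine Finset.sum_congr rfl fun i _ => ?_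
        have hd' : d i ≠ 0 := (hd i).ne'
        rw [hvdef]
        field_simp
        ring
      have h1 := hcross e
      have h2 := hquadv e
      have hQ0 : 0 ≤ ∑ i, v i * e i ^ 2 :=
        Finset.sum_nonneg fun i _ => mul_nonneg (hv i).le (sq_nonneg _)
      have hγμ : γ * μ = μ ^ 2 / L := by rw [hγdef]; field_simp
      have hγ2L : γ ^ 2 * L = μ ^ 2 / L := by rw [hγdef]; field_simp
      have e1 : 2 * γ * (∑ i, lam i * e i * (A *ᵥ e) i)
          ≤ 2 * γ * (-μ * ∑ i, v i * e i ^ 2) := by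
        apply mul_le_mul_of_nonneg_left h1 (by positivity)
      have e2 : 2 * γ * (-μ * ∑ i, v i * e i ^ 2) = -(2 * (γ * μ) * ∑ i, v i * e i ^ 2) := by ring
      rw [hγμ] at e2
      have e3 : γ ^ 2 * ∑ i, (lam i / d i) * ((A *ᵥ e) i) ^ 2
          ≤ γ ^ 2 * (L * ∑ i, v i * e i ^ 2) :=
        mul_le_mul_of_nonneg_left h2 (sq_nonneg _)
      have e4 : γ ^ 2 * (L * ∑ i, v i * e i ^ 2) = (γ ^ 2 * L) * ∑ i, v i * e i ^ 2 := by ring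
      rw [hγ2L] at e4
      calc ∑ i, v i * (T x i - T x' i) ^ 2
          ≤ ∑ i, (lam i / d i) * (d i * e i + γ * (A *ᵥ e) i) ^ 2 :=
            Finset.sum_le_sum fun i _ => step1 i
        _ = ∑ i, v i * e i ^ 2 + 2 * γ * (∑ i, lam i * e i * (A *ᵥ e) i)
            + γ ^ 2 * ∑ i, (lam i / d i) * ((A *ᵥ e) i) ^ 2 := step2
        _ ≤ k2 * ∑ i, v i * e i ^ 2 := by
            rw [hk2def]
            linarith [e1, e2, e3, e4]
        _ = k2 * ∑ i, v i * (x i - x' i) ^ 2 := by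
            congr 1
    -- Banach fixed point setup
    set E := EuclideanSpace ℝ (Fin n) with hE
    set w : Fin n → ℝ := fun i => Real.sqrt (v i) with hwdef
    have hw : ∀ i, 0 < w i := fun i => Real.sqrt_pos.mpr (hv i)
    have hw2 : ∀ i, w i ^ 2 = v i := fun i => Real.sq_sqrt (hv i).le
    set F : E → E := fun z => WithLp.toLp 2 (fun i => w i * T (fun j => z j / w j) i : Fin n → ℝ) with hFdef
    set k := Real.sqrt k2 with hkdef
    have hk0 : 0 ≤ k := Real.sqrt_nonneg _
    have hksq : k ^ 2 = k2 := Real.sq_sqrt hk2a.le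
    have hk1 : k < 1 := by
      rw [hkdef, show (1:ℝ) = Real.sqrt 1 by simp]
      exact Real.sqrt_lt_sqrt hk2a.le (by simpa using hk2b)
    set K : NNReal := ⟨k, hk0⟩ with hKdef
    have hK1 : K < 1 := by
      rw [← NNReal.coe_lt_coe]
      exact hk1
    have hF : ContractingWith K F := by
      refine ⟨hK1, LipschitzWith.of_dist_le_mul ?_⟩
      intro z z'
      have hxz : ∀ i : Fin n, dist (F z i) (F z' i) ^ 2
          = v i * (T (fun j => z j / w j) i - T (fun j => z' j / w j) i) ^ 2 := by
        intro i
        rw [Real.dist_eq, sq_abs, ← hw2 i]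
        have : F z i = w i * T (fun j => z j / w j) i := rfl
        rw [this, show F z' i = w i * T (fun j => z' j / w j) i from rfl]
        ring
      have hxz' : ∀ i : Fin n, dist (z i) (z' i) ^ 2
          = v i * ((fun j => z j / w j) i - (fun j => z' j / w j) i) ^ 2 := by
        intro i
        rw [Real.dist_eq, sq_abs, ← hw2 i]
        have hwne : w i ≠ 0 := (hw i).ne'
        field_simp
      rw [EuclideanSpace.dist_eq, EuclideanSpace.dist_eq]
      have hsum1 : ∑ i, dist (F z i) (F z' i) ^ 2
          = ∑ i, v i * (T (fun j => z j / w j) i - T (fun j => z' j / w j) i) ^ 2 :=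
        Finset.sum_congr rfl fun i _ => hxz i
      have hsum2 : ∑ i, dist (z i) (z' i) ^ 2
          = ∑ i, v i * ((fun j => z j / w j) i - (fun j => z' j / w j) i) ^ 2 :=
        Finset.sum_congr rfl fun i _ => hxz' i
      rw [hsum1, hsum2]
      have hle := hcontract (fun j => z j / w j) (fun j => z' j / w j)
      calc Real.sqrt (∑ i, v i * (T (fun j => z j / w j) i - T (fun j => z' j / w j) i) ^ 2)
          ≤ Real.sqrt (k2 * ∑ i, v i *
              ((fun j => z j / w j) i - (fun j => z' j / w j) i) ^ 2) :=
            Real.sqrt_le_sqrt hle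
        _ = k * Real.sqrt (∑ i, v i *
              ((fun j => z j / w j) i - (fun j => z' j / w j) i) ^ 2) := by
            rw [Real.sqrt_mul hk2a.le, hkdef]
        _ = ↑K * Real.sqrt (∑ i, v i *
              ((fun j => z j / w j) i - (fun j => z' j / w j) i) ^ 2) := rfl
    haveI : Nonempty E := ⟨0⟩
    obtain ⟨z₀, hz₀⟩ : ∃ z : E, Function.IsFixedPt F z := ⟨_, hF.fixedPoint_isFixedPt⟩
    set x₀ : Fin n → ℝ := fun j => z₀ j / w j with hx₀def
    have hTx₀ : T x₀ = x₀ := by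
      funext i
      have h1 : F z₀ i = z₀ i := congrArg (fun z : E => z i) hz₀
      have h2 : w i * T x₀ i = z₀ i := h1
      rw [hx₀def]
      show T x₀ i = z₀ i / w i
      rw [← h2, mul_comm, mul_div_assoc, div_self (hw i).ne', mul_one]
    -- equivalence between the property and T-fixed-points
    have hPT : ∀ x : Fin n → ℝ,
        ((∀ i, d i * x i ∈ Set.Icc (0:ℝ) 1) ∧
          ∃ σ : Fin n → ℝ, (∀ i, σ i ∈ hsel ((A *ᵥ x + u) i))
            ∧ Matrix.diagonal d *ᵥ x = σ) ↔ T x = x := by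
      intro x
      have hDx : ∀ i, (Matrix.diagonal d *ᵥ x) i = d i * x i :=
        fun i => Matrix.mulVec_diagonal d x i
      constructor
      · rintro ⟨hx, σ, hσ, rfl⟩
        funext i
        have h1 : d i * x i ∈ hsel ((A *ᵥ x + u) i) := by rw [← hDx i]; exact hσ i
        have h2 := (hsel_iff γ _ _ hγ (hx i)).mp h1
        show sat (d i * x i + γ * ((A *ᵥ x + u) i)) / d i = x i
        rw [← h2, mul_div_cancel_left₀ _ (hd i).ne']
      · intro hT
        have hxi : ∀ i, d i * x i = sat (d i * x i + γ * ((A *ᵥ x + u) i)) := by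
          intro i
          have h' : x i = sat (d i * x i + γ * ((A *ᵥ x + u) i)) / d i := (congrFun hT i).symm
          conv_lhs => rw [h']
          rw [mul_comm, div_mul_cancel₀ _ (hd i).ne']
        refine ⟨fun i => ?_, ⟨Matrix.diagonal d *ᵥ x, fun i => ?_, rfl⟩⟩
        · rw [hxi i]; exact sat_mem _
        · rw [hDx i]
          exact (hsel_iff γ _ _ hγ (by rw [hxi i]; exact sat_mem _)).mpr (hxi i)
    refine ⟨x₀, (hPT x₀).mpr hTx₀, ?_⟩
    intro x hx
    have hTx : T x = x := (hPT x).mp hx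
    have hzfix : Function.IsFixedPt F (WithLp.toLp 2 (fun i => w i * x i : Fin n → ℝ) : E) := by
      show F _ = _
      ext i
      show w i * T (fun j => (w j * x j) / w j) i = w i * x i
      have hxx : (fun j => (w j * x j) / w j) = x := funext fun j =>
        mul_div_cancel_left₀ _ (hw j).ne'
      rw [hxx, hTx]
    have huniq := hF.fixedPoint_unique' hzfix hz₀
    funext j
    have hj : w j * x j = z₀ j := congrArg (fun z : E => z j) huniq
    show x j = x₀ j
    rw [hx₀def]
    show x j = z₀ j / w j
    rw [← hj, mul_div_cancel_left₀ _ (hw j).ne']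
end

section
/- Let Λ = diag(λ_1,…,λ_n) be a positive diagonal matrix and define V_∞(x) = max over ζ ∈ {0,1}^n of (Ax + u)^T Λ (ζ - Dx). Then for x ∈ X, V_∞(x) = 0 if and only if for each i: (Ax+u)_i ≤ 0 whenever d_i x_i = 0, (Ax+u)_i = 0 whenever 0 < d_i x_i < 1, and (Ax+u)_i ≥ 0 whenever d_i x_i = 1 (i.e., x is an equilibrium of the linear-threshold network). In particular, if A is Lyapunov diagonally stable with certificate Λ, then V_∞(x) = 0 if and only if x equals the unique equilibrium x*. -/
open Matrix
open scoped Classical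

/-- The slow-limit Lyapunov function
`V_∞(x) = max_{ζ ∈ {0,1}ⁿ} (Ax + u)ᵀ Λ (ζ - Dx)`. -/
noncomputable def Vinf (n : ℕ) (lam d : Fin n → ℝ) (A : Matrix (Fin n) (Fin n) ℝ)
    (u : Fin n → ℝ) (x : Fin n → ℝ) : ℝ :=
  ⨆ ζ : Fin n → Bool,
    ∑ i, (A *ᵥ x + u) i * lam i * ((if ζ i then (1:ℝ) else 0) - d i * x i)


lemma sup_sum_bool {n : ℕ} (c : Fin n → Bool → ℝ) :
    (⨆ ζ : Fin n → Bool, ∑ i, c i (ζ i)) = ∑ i, max (c i true) (c i false) := by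
  apply le_antisymm
  · apply ciSup_le
    intro ζ
    apply Finset.sum_le_sum
    intro i _
    cases h : ζ i
    · simp [h]
    · simp [h]
  · have h := le_ciSup (f := fun ζ : Fin n → Bool => ∑ i, c i (ζ i))
      (Set.finite_range _).bddAbove (fun i => if c i false ≤ c i true then true else false)
    refine le_trans (le_of_eq ?_) h
    apply Finset.sum_congr rfl
    intro i _
    by_cases hc : c i false ≤ c i true
    · simp [hc, max_eq_left hc]
    · simp [hc, max_eq_right (le_of_not_ge hc)]

lemma term_nonneg {lam y s : ℝ} (hlam : 0 < lam) (h0 : 0 ≤ s) (h1 : s ≤ 1) :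
    0 ≤ max (y * lam * (1 - s)) (y * lam * (0 - s)) := by
  rcases le_or_gt 0 y with h | h
  · exact le_max_of_le_left (by nlinarith [mul_nonneg (mul_nonneg h hlam.le) (by linarith : (0:ℝ) ≤ 1 - s)])
  · exact le_max_of_le_right (by nlinarith [mul_nonneg (mul_nonneg (neg_nonneg.mpr h.le) hlam.le) h0])

lemma term_eq_zero_iff {lam y s : ℝ} (hlam : 0 < lam) (h0 : 0 ≤ s) (h1 : s ≤ 1) :
    max (y * lam * (1 - s)) (y * lam * (0 - s)) = 0 ↔
      (s = 0 → y ≤ 0) ∧ (0 < s → s < 1 → y = 0) ∧ (s = 1 → 0 ≤ y) := by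
  constructor
  · intro h
    obtain ⟨hle1, hle2⟩ := max_le_iff.mp (le_of_eq h)
    refine ⟨fun hs => ?_, fun hs hs' => ?_, fun hs => ?_⟩
    · subst hs; nlinarith
    · have hy1 : y ≤ 0 := by nlinarith [mul_pos hlam (show (0:ℝ) < 1 - s by linarith)]
      have hy2 : 0 ≤ y := by nlinarith [mul_pos hlam hs]
      linarith
    · subst hs; nlinarith
  · rintro ⟨hc1, hc2, hc3⟩
    refine le_antisymm (max_le ?_ ?_) (term_nonneg hlam h0 h1)
    · rcases eq_or_lt_of_le h0 with hs0 | hs0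
      · have hy := hc1 hs0.symm
        rw [← hs0]
        nlinarith [mul_nonneg (mul_nonneg (neg_nonneg.mpr hy) hlam.le) (by norm_num : (0:ℝ) ≤ 1)]
      · rcases eq_or_lt_of_le h1 with hs1 | hs1
        · subst hs1; nlinarith
        · have hy := hc2 hs0 hs1; subst hy; nlinarith
    · rcases eq_or_lt_of_le h0 with hs0 | hs0
      · rw [← hs0]; nlinarith
      · rcases eq_or_lt_of_le h1 with hs1 | hs1
        · have hy := hc3 hs1
          subst hs1
          nlinarith [mul_nonneg (mul_nonneg hy hlam.le) (by norm_num : (0:ℝ) ≤ 1)]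
        · have hy := hc2 hs0 hs1; subst hy; nlinarith

lemma Vinf_eq {n : ℕ} (lam d : Fin n → ℝ) (A : Matrix (Fin n) (Fin n) ℝ)
    (u : Fin n → ℝ) (x : Fin n → ℝ) :
    Vinf n lam d A u x =
      ∑ i, max ((A *ᵥ x + u) i * lam i * (1 - d i * x i))
               ((A *ᵥ x + u) i * lam i * (0 - d i * x i)) := by
  have h := sup_sum_bool (fun i b =>
    (A *ᵥ x + u) i * lam i * ((if b then (1:ℝ) else 0) - d i * x i))
  simpa [Vinf] using h

lemma Vinf_zero_iff {n : ℕ} (lam d : Fin n → ℝ) (hlam : ∀ i, 0 < lam i)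
    (A : Matrix (Fin n) (Fin n) ℝ) (u : Fin n → ℝ) (x : Fin n → ℝ)
    (hx : ∀ i, d i * x i ∈ Set.Icc (0:ℝ) 1) :
    Vinf n lam d A u x = 0 ↔
      ∀ i, (d i * x i = 0 → (A *ᵥ x + u) i ≤ 0)
        ∧ (0 < d i * x i → d i * x i < 1 → (A *ᵥ x + u) i = 0)
        ∧ (d i * x i = 1 → 0 ≤ (A *ᵥ x + u) i) := by
  rw [Vinf_eq]
  rw [Finset.sum_eq_zero_iff_of_nonneg
    (fun i _ => term_nonneg (hlam i) (hx i).1 (hx i).2)]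
  constructor
  · intro h i
    exact (term_eq_zero_iff (hlam i) (hx i).1 (hx i).2).mp (h i (Finset.mem_univ i))
  · intro h i _
    exact (term_eq_zero_iff (hlam i) (hx i).1 (hx i).2).mpr (h i)

lemma quad_form_eq {n : ℕ} (lam : Fin n → ℝ) (A : Matrix (Fin n) (Fin n) ℝ) (z : Fin n → ℝ) :
    z ⬝ᵥ ((Aᵀ * Matrix.diagonal lam + Matrix.diagonal lam * A) *ᵥ z)
      = ∑ i, 2 * (lam i * (z i * (A *ᵥ z) i)) := by
  rw [add_mulVec, dotProduct_add, ← Matrix.mulVec_mulVec, ← Matrix.mulVec_mulVec,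
    Matrix.dotProduct_mulVec z Aᵀ, Matrix.vecMul_transpose]
  simp only [dotProduct, Matrix.mulVec_diagonal]
  rw [← Finset.sum_add_distrib]
  exact Finset.sum_congr rfl fun i _ => by ring

lemma equilib_sign {n : ℕ} (d : Fin n → ℝ) (A : Matrix (Fin n) (Fin n) ℝ)
    (u : Fin n → ℝ) (x : Fin n → ℝ) (i : Fin n)
    (hx : d i * x i ∈ Set.Icc (0:ℝ) 1)
    (hex : (d i * x i = 0 → (A *ᵥ x + u) i ≤ 0)
      ∧ (0 < d i * x i → d i * x i < 1 → (A *ᵥ x + u) i = 0)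
      ∧ (d i * x i = 1 → 0 ≤ (A *ᵥ x + u) i)) :
    (0 < d i * x i → 0 ≤ (A *ᵥ x + u) i) ∧ (d i * x i < 1 → (A *ᵥ x + u) i ≤ 0) := by
  obtain ⟨h1, h2, h3⟩ := hex
  constructor
  · intro hs
    rcases eq_or_lt_of_le hx.2 with hs1 | hs1
    · exact h3 hs1
    · exact le_of_eq (h2 hs hs1).symm
  · intro hs
    rcases eq_or_lt_of_le hx.1 with hs0 | hs0
    · exact h1 hs0.symm
    · exact le_of_eq (h2 hs0 hs)

lemma equilib_unique {n : ℕ} (d : Fin n → ℝ) (hd : ∀ i, 0 < d i)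
    (lam : Fin n → ℝ) (hlam : ∀ i, 0 < lam i)
    (A : Matrix (Fin n) (Fin n) ℝ) (u : Fin n → ℝ)
    (hneg : ∀ z : Fin n → ℝ, z ≠ 0 →
      z ⬝ᵥ ((Aᵀ * Matrix.diagonal lam + Matrix.diagonal lam * A) *ᵥ z) < 0)
    (x xs : Fin n → ℝ)
    (hx : ∀ i, d i * x i ∈ Set.Icc (0:ℝ) 1)
    (hxs : ∀ i, d i * xs i ∈ Set.Icc (0:ℝ) 1)
    (hex : ∀ i, (d i * x i = 0 → (A *ᵥ x + u) i ≤ 0)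
      ∧ (0 < d i * x i → d i * x i < 1 → (A *ᵥ x + u) i = 0)
      ∧ (d i * x i = 1 → 0 ≤ (A *ᵥ x + u) i))
    (hexs : ∀ i, (d i * xs i = 0 → (A *ᵥ xs + u) i ≤ 0)
      ∧ (0 < d i * xs i → d i * xs i < 1 → (A *ᵥ xs + u) i = 0)
      ∧ (d i * xs i = 1 → 0 ≤ (A *ᵥ xs + u) i)) :
    x = xs := by
  by_contra hne
  have hq := hneg (x - xs) (sub_ne_zero.mpr hne)
  rw [quad_form_eq] at hq
  have hnn : ∀ i ∈ Finset.univ, 0 ≤ 2 * (lam i * ((x - xs) i * (A *ᵥ (x - xs)) i)) := by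
    intro i _
    have hAz : (A *ᵥ (x - xs)) i = (A *ᵥ x + u) i - (A *ᵥ xs + u) i := by
      rw [Matrix.mulVec_sub]; simp
    rw [hAz, Pi.sub_apply]
    set y := (A *ᵥ x + u) i
    set ys := (A *ᵥ xs + u) i
    obtain ⟨hupx, hdownx⟩ := equilib_sign d A u x i (hx i) (hex i)
    obtain ⟨hupxs, hdownxs⟩ := equilib_sign d A u xs i (hxs i) (hexs i)
    rcases lt_trichotomy (x i) (xs i) with hlt | heq | hgt
    · have hdx : d i * x i < d i * xs i := by
        exact mul_lt_mul_of_pos_left hlt (hd i)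
      have hy : y ≤ 0 := hdownx (lt_of_lt_of_le hdx (hxs i).2)
      have hys : 0 ≤ ys := hupxs (lt_of_le_of_lt (hx i).1 hdx)
      nlinarith [mul_nonneg (mul_nonneg (hlam i).le (sub_nonneg.mpr hlt.le))
        (sub_nonneg.mpr (hy.trans hys))]
    · rw [heq]; ring_nf; nlinarith [hlam i]
    · have hdx : d i * xs i < d i * x i := by
        exact mul_lt_mul_of_pos_left hgt (hd i)
      have hy : 0 ≤ y := hupx (lt_of_le_of_lt (hxs i).1 hdx)
      have hys : ys ≤ 0 := hdownxs (lt_of_lt_of_le hdx (hx i).2)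
      nlinarith [mul_nonneg (mul_nonneg (hlam i).le (sub_nonneg.mpr hgt.le))
        (sub_nonneg.mpr (hys.trans hy))]
  linarith [Finset.sum_nonneg hnn]

/-- **Positive definiteness of the slow-limit Lyapunov function.** For `x ∈ X`,
`V_∞(x) = 0` iff `x` satisfies the LTN equilibrium conditions. In particular,
if `A` is Lyapunov diagonally stable with certificate Λ and `x*` is the unique
equilibrium, then `V_∞(x) = 0 ↔ x = x*` on `X`. -/
theorem Vinf_positive_definite
    (n : ℕ) (hn : 1 ≤ n)
    (d : Fin n → ℝ) (hd : ∀ i, 0 < d i)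
    (W : Matrix (Fin n) (Fin n) ℝ) (u : Fin n → ℝ)
    (A : Matrix (Fin n) (Fin n) ℝ) (hA : A = W - Matrix.diagonal d)
    (lam : Fin n → ℝ) (hlam : ∀ i, 0 < lam i) :
    (∀ x : Fin n → ℝ, (∀ i, d i * x i ∈ Set.Icc (0:ℝ) 1) →
      (Vinf n lam d A u x = 0 ↔
        ∀ i, (d i * x i = 0 → (A *ᵥ x + u) i ≤ 0)
          ∧ (0 < d i * x i → d i * x i < 1 → (A *ᵥ x + u) i = 0)
          ∧ (d i * x i = 1 → 0 ≤ (A *ᵥ x + u) i)))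
    ∧ ((∀ z : Fin n → ℝ, z ≠ 0 →
          z ⬝ᵥ ((Aᵀ * Matrix.diagonal lam + Matrix.diagonal lam * A) *ᵥ z) < 0) →
        ∀ xs : Fin n → ℝ, (∀ i, d i * xs i ∈ Set.Icc (0:ℝ) 1) →
          (∀ i, (d i * xs i = 0 → (A *ᵥ xs + u) i ≤ 0)
            ∧ (0 < d i * xs i → d i * xs i < 1 → (A *ᵥ xs + u) i = 0)
            ∧ (d i * xs i = 1 → 0 ≤ (A *ᵥ xs + u) i)) →
          ∀ x : Fin n → ℝ, (∀ i, d i * x i ∈ Set.Icc (0:ℝ) 1) →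
            (Vinf n lam d A u x = 0 ↔ x = xs)) := by
  constructor
  · intro x hx
    exact Vinf_zero_iff lam d hlam A u x hx
  · intro hneg xs hxs hexs x hx
    rw [Vinf_zero_iff lam d hlam A u x hx]
    constructor
    · intro hex
      exact equilib_unique d hd lam hlam A u hneg x xs hx hxs hex hexs
    · rintro rfl
      exact hexs
end
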